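/- arXiv:1306.3611 — 2 statements merged into one kernel-verified Lean document; each statement's English description precedes it below -/
import Mathlib

section
/- Let M₀ ~ M₁ ~ ... ~ M_d be a geodesic in 𝒫_m (a path of length d(M₀,M_d) between M₀ and M_d). Then every matching M_i on the geodesic contains every edge common to M₀ and M_d. -/
open SimpleGraph

/-- A simple graph on `Fin n` is a perfect matching if every vertex is
incident with exactly one edge, i.e. has a unique neighbor. -/
def IsPerfMatching {n : ℕ} (M : SimpleGraph (Fin n)) : Prop :=
  ∀ v, ∃! w, M.Adj v w

/-- A simple graph is (i.e. its edges form) a single cycle of length `n`: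
there is a cycle of length `n` passing through all of its edges. -/
def IsCycleGraphOfLength {V : Type*} (G : SimpleGraph V) (n : ℕ) : Prop :=
  ∃ (v : V) (p : G.Walk v v), p.IsCycle ∧ p.length = n ∧ ∀ e ∈ G.edgeSet, e ∈ p.edges

/-- Two perfect matchings are adjacent in the matching graph `𝒫ₘ` iff they are
distinct and their symmetric difference is a cycle of length four. -/
def MatchAdj {n : ℕ} (M₁ M₂ : SimpleGraph (Fin n)) : Prop :=
  M₁ ≠ M₂ ∧ IsCycleGraphOfLength (symmDiff M₁ M₂) 4

/-- Vertices of the graph `𝒫ₘ`: all perfect matchings of `K_{2m}`. -/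
abbrev PMVertex (m : ℕ) := {M : SimpleGraph (Fin (2 * m)) // IsPerfMatching M}

/-- The graph `𝒫ₘ` of perfect matchings of `K_{2m}`. -/
def matchingGraph (m : ℕ) : SimpleGraph (PMVertex m) where
  Adj M₁ M₂ := MatchAdj M₁.1 M₂.1
  symm := by
    constructor
    rintro M₁ M₂ ⟨hne, hc⟩
    exact ⟨hne.symm, by rwa [symmDiff_comm]⟩
  loopless := ⟨fun M h => h.1 rfl⟩

/-- The number of geodesics (shortest paths) between two vertices of a graph. -/
noncomputable def geodesicCount {V : Type*} (G : SimpleGraph V) (u v : V) : ℕ :=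
  Nat.card {p : G.Walk u v // p.IsPath ∧ p.length = G.dist u v}


namespace Stmt8

variable {n : ℕ}

/-- transposition as a bare function -/
def msw (b x u : Fin n) : Fin n := if u = b then x else if u = x then b else u

@[simp] lemma msw_left (b x : Fin n) : msw b x b = x := by simp [msw]
@[simp] lemma msw_right (b x : Fin n) : msw b x x = b := by
  unfold msw; split_ifs with h <;> simp_all
lemma msw_other {b x u : Fin n} (h1 : u ≠ b) (h2 : u ≠ x) : msw b x u = u := by
  simp [msw, h1, h2]
lemma msw_invol (b x : Fin n) (u : Fin n) : msw b x (msw b x u) = u := by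
  unfold msw; split_ifs <;> simp_all

lemma msw_comm {b x c d : Fin n} (h1 : b ≠ c) (h2 : b ≠ d) (h3 : x ≠ c) (h4 : x ≠ d) (u : Fin n) :
    msw b x (msw c d u) = msw c d (msw b x u) := by
  unfold msw; split_ifs <;> simp_all

/-- fixed-point-free involution -/
def Inv (f : Fin n → Fin n) : Prop := (∀ v, f (f v) = v) ∧ ∀ v, f v ≠ v

/-- conjugate an involution by a transposition -/
def sw (f : Fin n → Fin n) (b x : Fin n) : Fin n → Fin n :=
  fun u => msw b x (f (msw b x u))

lemma Inv.sw {f : Fin n → Fin n} (hf : Inv f) (b x : Fin n) : Inv (sw f b x) := by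
  constructor
  · intro v; simp [Stmt8.sw, msw_invol, hf.1]
  · intro v h
    apply hf.2 (msw b x v)
    have h2 := congrArg (msw b x) h
    unfold Stmt8.sw at h2
    rwa [msw_invol] at h2

lemma sw_sw (f : Fin n → Fin n) (b x : Fin n) : sw (sw f b x) b x = f := by
  funext u; simp [sw, msw_invol]

lemma Inv.eq_iff {f : Fin n → Fin n} (hf : Inv f) {u v : Fin n} : f u = v ↔ f v = u := by
  constructor
  · rintro rfl; exact hf.1 u
  · rintro rfl; exact hf.1 v

/-- the matching graph of a function (intended: fpf involution) -/
def mkM (f : Fin n → Fin n) : SimpleGraph (Fin n) where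
  Adj u v := u ≠ v ∧ f u = v ∧ f v = u
  symm := by constructor; rintro u v ⟨h1, h2, h3⟩; exact ⟨h1.symm, h3, h2⟩
  loopless := by constructor; rintro u ⟨h1, -⟩; exact h1 rfl

lemma mkM_adj {f : Fin n → Fin n} (hf : Inv f) {u v : Fin n} :
    (mkM f).Adj u v ↔ f u = v := by
  constructor
  · rintro ⟨-, h, -⟩; exact h
  · rintro rfl; exact ⟨(hf.2 u).symm, rfl, hf.1 u⟩

lemma mkM_pm {f : Fin n → Fin n} (hf : Inv f) : IsPerfMatching (mkM f) := by
  intro v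
  refine ⟨f v, (mkM_adj hf).2 rfl, fun w hw => ?_⟩
  exact ((mkM_adj hf).1 hw).symm

lemma mkM_inj {f g : Fin n → Fin n} (hf : Inv f) (hg : Inv g) (h : mkM f = mkM g) : f = g := by
  funext u
  have : (mkM g).Adj u (f u) := by rw [← h]; exact (mkM_adj hf).2 rfl
  exact ((mkM_adj hg).1 this).symm

/-- the partner function of a perfect matching -/
noncomputable def pf (M : SimpleGraph (Fin n)) (hM : IsPerfMatching M) (v : Fin n) : Fin n :=
  (hM v).choose

lemma pf_adj {M : SimpleGraph (Fin n)} (hM : IsPerfMatching M) (v : Fin n) :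
    M.Adj v (pf M hM v) := (hM v).choose_spec.1

lemma adj_pf {M : SimpleGraph (Fin n)} (hM : IsPerfMatching M) {u v : Fin n} (h : M.Adj u v) :
    pf M hM u = v := ((hM u).choose_spec.2 v h).symm

lemma pf_inv {M : SimpleGraph (Fin n)} (hM : IsPerfMatching M) : Inv (pf M hM) := by
  constructor
  · intro v; exact adj_pf hM (pf_adj hM v).symm
  · intro v h
    have := pf_adj hM v
    rw [h] at this
    exact M.irrefl this

lemma mkM_pf {M : SimpleGraph (Fin n)} (hM : IsPerfMatching M) : mkM (pf M hM) = M := by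
  ext u v
  rw [mkM_adj (pf_inv hM)]
  constructor
  · rintro rfl; exact pf_adj hM u
  · exact adj_pf hM

lemma symmDiff_adj {f g : Fin n → Fin n} (hf : Inv f) (hg : Inv g) (u v : Fin n) :
    (symmDiff (mkM f) (mkM g)).Adj u v ↔ ((f u = v ∧ g u ≠ v) ∨ (g u = v ∧ f u ≠ v)) := by
  rw [symmDiff_def]
  simp only [SimpleGraph.sup_adj, SimpleGraph.sdiff_adj, mkM_adj hf, mkM_adj hg]

end Stmt8

namespace Stmt8
variable {n : ℕ}

section swvals
variable {f : Fin n → Fin n} {b x : Fin n}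

lemma y_ne_b (hf : Inv f) (hfbx : f b ≠ x) : f x ≠ b := fun h => hfbx (((hf.eq_iff).1 h).symm ▸ rfl)

lemma sw_b (hf : Inv f) (hfbx : f b ≠ x) : sw f b x b = f x := by
  have hyb : f x ≠ b := y_ne_b hf hfbx
  have hyx : f x ≠ x := hf.2 x
  simp [sw, msw_left, msw_other hyb hyx]

lemma sw_x (hf : Inv f) (hfbx : f b ≠ x) : sw f b x x = f b := by
  have hab : f b ≠ b := hf.2 b
  simp [sw, msw_right, msw_other hab hfbx]

lemma sw_a (hf : Inv f) (hfbx : f b ≠ x) : sw f b x (f b) = x := by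
  have hab : f b ≠ b := hf.2 b
  simp [sw, msw_other hab hfbx, hf.1 b]

lemma sw_y (hf : Inv f) (hfbx : f b ≠ x) : sw f b x (f x) = b := by
  have hyb : f x ≠ b := y_ne_b hf hfbx
  have hyx : f x ≠ x := hf.2 x
  simp [sw, msw_other hyb hyx, hf.1 x]

lemma sw_other (hf : Inv f) (hfbx : f b ≠ x) {u : Fin n} (hub : u ≠ b) (hux : u ≠ x) (hua : u ≠ f b) (huy : u ≠ f x) :
    sw f b x u = f u := by
  have h1 : f u ≠ b := fun h => hua (by rw [← hf.eq_iff.1 h])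
  have h2 : f u ≠ x := fun h => huy (by rw [← hf.eq_iff.1 h])
  simp [sw, msw_other hub hux, msw_other h1 h2]

lemma sw_ne (hf : Inv f) (hfbx : f b ≠ x) {u : Fin n} (h : sw f b x u ≠ f u) : u = b ∨ u = x ∨ u = f b ∨ u = f x := by
  by_contra hc
  push_neg at hc
  exact h (sw_other hf hfbx hc.1 hc.2.1 hc.2.2.1 hc.2.2.2)

/-- Lemma B: a swap produces an adjacent matching. -/
lemma cycle4 {V} {G : SimpleGraph V} {a b y x : V} (h1 : G.Adj a b) (h2 : G.Adj b y) (h3 : G.Adj y x) (h4 : G.Adj x a)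
    (hab : a ≠ b) (hay : a ≠ y) (hax : a ≠ x) (hby : b ≠ y) (hbx : b ≠ x) (hyx : y ≠ x) :
    (Walk.cons h1 (.cons h2 (.cons h3 (.cons h4 .nil)))).IsCycle := by
  simp [Walk.isCycle_def, Walk.isTrail_def, Sym2.eq_iff]
  aesop

lemma matchAdj_sw (hf : Inv f) (hbx : b ≠ x) (hfbx : f b ≠ x) : MatchAdj (mkM f) (mkM (sw f b x)) := by
  set a := f b with ha
  set y := f x with hy
  have hg : Inv (sw f b x) := hf.sw b x
  have hab : a ≠ b := hf.2 b
  have hxy : x ≠ y := fun h => hf.2 x (hy ▸ h.symm)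
  have hax : a ≠ x := hfbx
  have hyb : y ≠ b := y_ne_b hf hfbx
  have hay : a ≠ y := fun h => hbx (by rw [← hf.1 b, ← ha, h, hy, hf.1 x])
  constructor
  · intro h
    have := mkM_inj hf hg h
    have hb := congrArg (· b) this
    rw [sw_b hf hfbx] at hb
    exact hay hb
  · have h1 : (symmDiff (mkM f) (mkM (sw f b x))).Adj a b := by
      rw [symmDiff_adj hf hg]
      left
      exact ⟨hf.1 b, by rw [sw_a hf hfbx]; exact fun h => hbx h.symm⟩
    have h2 : (symmDiff (mkM f) (mkM (sw f b x))).Adj b y := by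
      rw [symmDiff_adj hf hg]
      right
      exact ⟨sw_b hf hfbx, fun h => hay (ha ▸ h)⟩
    have h3 : (symmDiff (mkM f) (mkM (sw f b x))).Adj y x := by
      rw [symmDiff_adj hf hg]
      left
      exact ⟨hf.1 x, by rw [sw_y hf hfbx]; exact hbx⟩
    have h4 : (symmDiff (mkM f) (mkM (sw f b x))).Adj x a := by
      rw [symmDiff_adj hf hg]
      right
      exact ⟨sw_x hf hfbx, fun h => hay h.symm⟩
    refine ⟨a, .cons h1 (.cons h2 (.cons h3 (.cons h4 .nil))), ?_, by simp, ?_⟩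
    · exact cycle4 h1 h2 h3 h4 hab hay hax hyb.symm hbx (fun h => hxy h.symm)
    · intro e he
      induction e with
      | _ u v =>
        rw [mem_edgeSet, symmDiff_adj hf hg] at he
        have hne : sw f b x u ≠ f u := by
          rcases he with ⟨h5, h6⟩ | ⟨h5, h6⟩ <;> (rw [h5] at *; tauto)
        rcases sw_ne hf hfbx hne with rfl | rfl | rfl | rfl <;>
          [ (rcases he with ⟨h5, h6⟩ | ⟨h5, h6⟩;
             · rw [sw_b hf hfbx] at h6; rw [← h5, ← ha]; simp [Sym2.eq_iff]
             · rw [sw_b hf hfbx] at h5; rw [← h5, ← hy]; simp [Sym2.eq_iff]);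
            (rcases he with ⟨h5, h6⟩ | ⟨h5, h6⟩;
             · rw [sw_x hf hfbx] at h6; rw [← h5, ← hy]; simp [Sym2.eq_iff]
             · rw [sw_x hf hfbx] at h5; rw [← h5, ← ha]; simp [Sym2.eq_iff]);
            (rcases he with ⟨h5, h6⟩ | ⟨h5, h6⟩;
             · rw [sw_a hf hfbx] at h6; rw [← h5, hf.1 b, ← ha]; simp [Sym2.eq_iff]
             · rw [sw_a hf hfbx] at h5; rw [← h5, ← ha]; simp [Sym2.eq_iff]);
            (rcases he with ⟨h5, h6⟩ | ⟨h5, h6⟩;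
             · rw [sw_y hf hfbx] at h6; rw [← h5, hf.1 x, ← hy]; simp [Sym2.eq_iff]
             · rw [sw_y hf hfbx] at h5; rw [← h5, ← hy]; simp [Sym2.eq_iff])]

end swvals
end Stmt8

namespace Stmt8
variable {n : ℕ}

/-- Lemma A: adjacent matchings differ by a swap. -/
lemma matchAdj_structure {f g : Fin n → Fin n} (hf : Inv f) (hg : Inv g)
    (h : MatchAdj (mkM f) (mkM g)) : ∃ b x, b ≠ x ∧ f b ≠ x ∧ g = sw f b x := by
  obtain ⟨-, v, p, hcyc, hlen, hcov⟩ := h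
  -- destructure the walk of length 4
  cases p with
  | nil => simp at hlen
  | cons h1 q =>
  rename_i c
  cases q with
  | nil => simp at hlen
  | cons h2 r =>
  rename_i d
  cases r with
  | nil => simp at hlen
  | cons h3 s =>
  rename_i w
  cases s with
  | nil => simp at hlen
  | cons h4 t =>
  rename_i z
  cases t with
  | cons h5 t' => simp at hlen
  | nil =>
  -- distinctness
  have hnd := hcyc.support_nodup
  simp only [Walk.support_cons, Walk.support_nil, List.tail_cons, List.nodup_cons,
    List.mem_cons, List.mem_singleton, List.nodup_nil, List.not_mem_nil, not_or] at hnd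
  have hcd : c ≠ d := by tauto
  have hcw : c ≠ w := by tauto
  have hcv : c ≠ v := by tauto
  have hdw : d ≠ w := by tauto
  have hdv : d ≠ v := by tauto
  have hwv : w ≠ v := by tauto
  have hvc : v ≠ c := h1.ne
  -- edges of the walk
  have hedges : ∀ u u' : Fin n, (symmDiff (mkM f) (mkM g)).Adj u u' →
      s(u, u') = s(v,c) ∨ s(u,u') = s(c,d) ∨ s(u,u') = s(d,w) ∨ s(u,u') = s(w,v) := by
    intro u u' hadj
    have := hcov s(u,u') (by rwa [mem_edgeSet])
    simpa using this
  rw [symmDiff_adj hf hg] at h1 h2 h3 h4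
  -- the generic off-support fact
  have hoff : ∀ u : Fin n, u ≠ v → u ≠ c → u ≠ d → u ≠ w → g u = f u := by
    intro u huv huc hud huw
    by_contra hgu
    have hadj : (symmDiff (mkM f) (mkM g)).Adj u (f u) := by
      rw [symmDiff_adj hf hg]; left; exact ⟨rfl, fun hh => hgu hh⟩
    have := hedges u (f u) hadj
    simp only [Sym2.eq_iff] at this
    rcases this with (⟨h,-⟩|⟨h,-⟩)|(⟨h,-⟩|⟨h,-⟩)|(⟨h,-⟩|⟨h,-⟩)|(⟨h,-⟩|⟨h,-⟩)
    exacts [huv h, huc h, huc h, hud h, hud h, huw h, huw h, huv h]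
  rcases h1 with ⟨hfv, hgv⟩ | ⟨hgv, hfv⟩
  · -- f v = c
    have hfc : f c = v := hf.eq_iff.1 hfv
    have hgc : g c = d := by
      rcases h2 with ⟨h2a, -⟩ | ⟨h2a, -⟩
      · exact absurd (hfc ▸ h2a) hdv.symm
      · exact h2a
    have hgd : g d = c := hg.eq_iff.1 hgc
    have hfd : f d = w := by
      rcases h3 with ⟨h3a, -⟩ | ⟨h3a, -⟩
      · exact h3a
      · exact absurd (hgd ▸ h3a) hcw
    have hfw : f w = d := hf.eq_iff.1 hfd
    have hgw : g w = v := by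
      rcases h4 with ⟨h4a, -⟩ | ⟨h4a, -⟩
      · exact absurd (hf.eq_iff.1 h4a ▸ hfv) (by rw [hf.eq_iff.1 h4a] at hfv; exact fun _ => hcw (hfv ▸ rfl))
      · exact h4a
    have hgv' : g v = w := hg.eq_iff.1 hgw
    refine ⟨c, w, hcw, by rw [hfc]; exact fun hh => hwv hh.symm, ?_⟩
    funext u
    by_cases huv : u = v
    · subst huv; rw [hgv', sw]
      rw [msw_other hvc (Ne.symm hwv), hfv, msw_left]
    · by_cases huc : u = c
      · subst huc; rw [hgc, sw, msw_left, hfw, msw_other hcd.symm hdw]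
      · by_cases hud : u = d
        · subst hud; rw [hgd, sw, msw_other hcd.symm hdw, hfd, msw_right]
        · by_cases huw : u = w
          · subst huw; rw [hgw, sw, msw_right, hfc, msw_other hvc hwv.symm]
          · rw [hoff u huv huc hud huw, sw, msw_other huc huw]
            have h1' : f u ≠ c := fun hh => huv (by rw [← hf.eq_iff.1 hh, hfc])
            have h2' : f u ≠ w := fun hh => hud (by rw [← hf.eq_iff.1 hh, hfw])
            rw [msw_other h1' h2']
  · -- g v = c
    have hgc : g c = v := hg.eq_iff.1 hgv
    have hfc : f c = d := by
      rcases h2 with ⟨h2a, -⟩ | ⟨h2a, -⟩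
      · exact h2a
      · exact absurd (hgc ▸ h2a) hdv.symm
    have hfd : f d = c := hf.eq_iff.1 hfc
    have hgd : g d = w := by
      rcases h3 with ⟨h3a, -⟩ | ⟨h3a, -⟩
      · exact absurd (hfd ▸ h3a) hcw
      · exact h3a
    have hgw : g w = d := hg.eq_iff.1 hgd
    have hfw : f w = v := by
      rcases h4 with ⟨h4a, -⟩ | ⟨h4a, -⟩
      · exact h4a
      · exact absurd (hgw ▸ h4a) hdv
    have hfv : f v = w := hf.eq_iff.1 hfw
    refine ⟨v, d, fun hh => hdv hh.symm, by rw [hfv]; exact fun hh => hdw hh.symm, ?_⟩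
    funext u
    by_cases huv : u = v
    · subst huv; rw [hgv, sw, msw_left, hfd, msw_other hcv hcd]
    · by_cases huc : u = c
      · subst huc; rw [hgc, sw, msw_other hcv hcd, hfc, msw_right]
      · by_cases hud : u = d
        · subst hud; rw [hgd, sw, msw_right, hfv, msw_other hwv (Ne.symm hdw)]
        · by_cases huw : u = w
          · subst huw; rw [hgw, sw, msw_other hwv (Ne.symm hdw), hfw, msw_left]
          · rw [hoff u huv huc hud huw, sw, msw_other huv hud]
            have h1' : f u ≠ v := fun hh => huw (by rw [← hf.eq_iff.1 hh, hfv])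
            have h2' : f u ≠ d := fun hh => huc (by rw [← hf.eq_iff.1 hh, hfd])
            rw [msw_other h1' h2']

end Stmt8

namespace Stmt8
variable {n : ℕ}

lemma swv (f : Fin n → Fin n) (b x u : Fin n) : sw f b x u = msw b x (f (msw b x u)) := rfl

lemma msw_symm (b x u : Fin n) : msw b x u = msw x b u := by
  unfold msw; split_ifs <;> simp_all

lemma sw_symm (f : Fin n → Fin n) (b x : Fin n) : sw f b x = sw f x b := by
  funext u; rw [swv, swv, msw_symm b x u, msw_symm b x]

lemma sw_sw_cross {f : Fin n → Fin n} {b x : Fin n} (hf : Inv f) (hbx : b ≠ x) (hfbx : f b ≠ x) :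
    sw (sw f b x) (f b) (f x) = f := by
  obtain ⟨hinv, hfp⟩ := hf
  have hf' : Inv f := ⟨hinv, hfp⟩
  have hab : f b ≠ b := hfp b
  have hyx : f x ≠ x := hfp x
  have hyb : f x ≠ b := y_ne_b hf' hfbx
  have hay : f b ≠ f x := fun h => hbx (by rw [← hinv b, h, hinv x])
  funext u
  by_cases h1 : u = f b
  · subst h1; simp [swv, msw, hinv, hfp, hbx, hfbx, hab, hyx, hyb, hay, hbx.symm, hfbx.symm, hab.symm, hyx.symm, hyb.symm, hay.symm]
  · by_cases h2 : u = f x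
    · subst h2; simp [swv, msw, hinv, hfp, hbx, hfbx, hab, hyx, hyb, hay, hbx.symm, hfbx.symm, hab.symm, hyx.symm, hyb.symm, hay.symm]
    · by_cases h3 : u = b
      · subst h3; simp [swv, msw, hinv, hfp, hbx, hfbx, hab, hyx, hyb, hay, hbx.symm, hfbx.symm, hab.symm, hyx.symm, hyb.symm, hay.symm]
      · by_cases h4 : u = x
        · subst h4; simp [swv, msw, hinv, hfp, hbx, hfbx, hab, hyx, hyb, hay, hbx.symm, hfbx.symm, hab.symm, hyx.symm, hyb.symm, hay.symm]
        · have k1 : f u ≠ b := fun h => h1 (by rw [← hinv u, h])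
          have k2 : f u ≠ x := fun h => h2 (by rw [← hinv u, h])
          have k3 : f u ≠ f b := fun h => h3 (by rw [← hinv u, h, hinv b])
          have k4 : f u ≠ f x := fun h => h4 (by rw [← hinv u, h, hinv x])
          simp [swv, msw, h1, h2, h3, h4, k1, k2, k3, k4]

end Stmt8

namespace Stmt8
variable {n : ℕ}

/-- force the pair (a₀, b₀) into the matching -/
def Ff (a₀ b₀ : Fin n) (f : Fin n → Fin n) : Fin n → Fin n :=
  if f a₀ = b₀ then f else sw f b₀ (f a₀)

lemma Ff_id {a₀ b₀ : Fin n} {f : Fin n → Fin n} (h : f a₀ = b₀) : Ff a₀ b₀ f = f := if_pos h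
lemma Ff_nid {a₀ b₀ : Fin n} {f : Fin n → Fin n} (h : f a₀ ≠ b₀) :
    Ff a₀ b₀ f = sw f b₀ (f a₀) := if_neg h

lemma Ff_inv {a₀ b₀ : Fin n} {f : Fin n → Fin n} (hf : Inv f) : Inv (Ff a₀ b₀ f) := by
  unfold Ff; split
  · exact hf
  · exact hf.sw _ _

lemma Ff_fix {a₀ b₀ : Fin n} {f : Fin n → Fin n} (hf : Inv f) (hab : a₀ ≠ b₀) :
    Ff a₀ b₀ f a₀ = b₀ := by
  by_cases h : f a₀ = b₀
  · rw [Ff_id h, h]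
  · rw [Ff_nid h, swv, msw_other hab (fun hh => hf.2 a₀ hh.symm), msw_right]

/-- if a step of the walk drops the forced edge, F collapses it -/
lemma collapse {a₀ b₀ b x : Fin n} {f : Fin n → Fin n} (hf : Inv f) (hbx : b ≠ x)
    (hfbx : f b ≠ x) (hP : f a₀ = b₀) (hP2 : sw f b x a₀ ≠ b₀) :
    Ff a₀ b₀ (sw f b x) = f := by
  rw [Ff_nid hP2]
  have hne : sw f b x a₀ ≠ f a₀ := by rw [hP]; exact hP2
  rcases sw_ne hf hfbx hne with rfl | rfl | h | h
  · -- a₀ = b, b₀ = f b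
    rw [← hP, sw_b hf hfbx, sw_sw_cross hf hbx hfbx]
  · -- a₀ = x, b₀ = f x
    rw [← hP, sw_x hf hfbx, sw_symm, sw_sw_cross hf hbx hfbx]
  · -- a₀ = f b, b₀ = f (f b) = b
    subst h; rw [← hP, hf.1 b, sw_a hf hfbx, sw_sw]
  · -- a₀ = f x, b₀ = x
    subst h; rw [← hP, hf.1 x, sw_y hf hfbx, sw_symm, sw_sw]

end Stmt8

namespace Stmt8
variable {n : ℕ}

lemma Ff_comm {a₀ b₀ : Fin n} {f : Fin n → Fin n} (hf : Inv f) (hab : a₀ ≠ b₀) :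
    Ff a₀ b₀ f = Ff b₀ a₀ f := by
  obtain ⟨hinv, hfp⟩ := hf
  by_cases hP : f a₀ = b₀
  · rw [Ff_id hP, Ff_id (by rw [← hP, hinv])]
  · have hP' : f b₀ ≠ a₀ := fun h => hP (by rw [← h, hinv])
    rw [Ff_nid hP, Ff_nid hP']
    have d1 : f a₀ ≠ a₀ := hfp a₀
    have d2 : f b₀ ≠ b₀ := hfp b₀
    have d3 : f a₀ ≠ f b₀ := fun h => hab (by rw [← hinv a₀, h, hinv b₀])
    funext u
    by_cases k1 : u = a₀ <;> by_cases k2 : u = b₀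
    · exact absurd (k1 ▸ k2 ▸ rfl : a₀ = b₀) (by simp_all)
    all_goals try (simp [swv, msw, k1, k2, hinv, hab, hab.symm, hP, hP', d1, d2, d3, d1.symm, d2.symm, d3.symm])
    by_cases k3 : u = f a₀ <;> by_cases k4 : u = f b₀
    · exact absurd (k3 ▸ k4 ▸ rfl : f a₀ = f b₀) (by simp_all)
    all_goals try (simp [swv, msw, k1, k2, k3, k4, hinv, hab, hab.symm, hP, hP', d1, d2, d3, d1.symm, d2.symm, d3.symm])
    have m1 : f u ≠ a₀ := fun h => k3 (by rw [← hinv u, h])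
    have m2 : f u ≠ b₀ := fun h => k4 (by rw [← hinv u, h])
    have m3 : f u ≠ f a₀ := fun h => k1 (by rw [← hinv u, h, hinv])
    have m4 : f u ≠ f b₀ := fun h => k2 (by rw [← hinv u, h, hinv])
    simp [swv, msw, k1, k2, k3, k4, m1, m2, m3, m4]

section fourb
variable {f : Fin n → Fin n} {b x : Fin n}

lemma L1 (hf : Inv f) (hbx : b ≠ x) (hfbx : f b ≠ x) :
    sw f (f x) b = sw (sw f b x) (f x) x := by
  obtain ⟨hinv, hfp⟩ := hf
  have hab : f b ≠ b := hfp b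
  have hyx : f x ≠ x := hfp x
  have hyb : f x ≠ b := y_ne_b ⟨hinv, hfp⟩ hfbx
  have hay : f b ≠ f x := fun h => hbx (by rw [← hinv b, h, hinv x])
  funext u
  by_cases h1 : u = f b
  · simp [swv, msw, h1, hinv, hfp, hbx, hfbx, hab, hyx, hyb, hay, hbx.symm, hfbx.symm, hab.symm, hyx.symm, hyb.symm, hay.symm]
  · by_cases h2 : u = f x
    · simp [swv, msw, h2, hinv, hfp, hbx, hfbx, hab, hyx, hyb, hay, hbx.symm, hfbx.symm, hab.symm, hyx.symm, hyb.symm, hay.symm]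
    · by_cases h3 : u = b
      · simp [swv, msw, h3, hinv, hfp, hbx, hfbx, hab, hyx, hyb, hay, hbx.symm, hfbx.symm, hab.symm, hyx.symm, hyb.symm, hay.symm]
      · by_cases h4 : u = x
        · simp [swv, msw, h4, hinv, hfp, hbx, hfbx, hab, hyx, hyb, hay, hbx.symm, hfbx.symm, hab.symm, hyx.symm, hyb.symm, hay.symm]
        · have k1 : f u ≠ b := fun h => h1 (by rw [← hinv u, h])
          have k2 : f u ≠ x := fun h => h2 (by rw [← hinv u, h])
          have k3 : f u ≠ f b := fun h => h3 (by rw [← hinv u, h, hinv b])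
          have k4 : f u ≠ f x := fun h => h4 (by rw [← hinv u, h, hinv x])
          simp [swv, msw, h1, h2, h3, h4, k1, k2, k3, k4]

lemma L2 (hf : Inv f) (hbx : b ≠ x) (hfbx : f b ≠ x) :
    sw f x (f b) = sw (sw f b x) x (f x) := by
  obtain ⟨hinv, hfp⟩ := hf
  have hab : f b ≠ b := hfp b
  have hyx : f x ≠ x := hfp x
  have hyb : f x ≠ b := y_ne_b ⟨hinv, hfp⟩ hfbx
  have hay : f b ≠ f x := fun h => hbx (by rw [← hinv b, h, hinv x])
  funext u
  by_cases h1 : u = f b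
  · simp [swv, msw, h1, hinv, hfp, hbx, hfbx, hab, hyx, hyb, hay, hbx.symm, hfbx.symm, hab.symm, hyx.symm, hyb.symm, hay.symm]
  · by_cases h2 : u = f x
    · simp [swv, msw, h2, hinv, hfp, hbx, hfbx, hab, hyx, hyb, hay, hbx.symm, hfbx.symm, hab.symm, hyx.symm, hyb.symm, hay.symm]
    · by_cases h3 : u = b
      · simp [swv, msw, h3, hinv, hfp, hbx, hfbx, hab, hyx, hyb, hay, hbx.symm, hfbx.symm, hab.symm, hyx.symm, hyb.symm, hay.symm]
      · by_cases h4 : u = x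
        · simp [swv, msw, h4, hinv, hfp, hbx, hfbx, hab, hyx, hyb, hay, hbx.symm, hfbx.symm, hab.symm, hyx.symm, hyb.symm, hay.symm]
        · have k1 : f u ≠ b := fun h => h1 (by rw [← hinv u, h])
          have k2 : f u ≠ x := fun h => h2 (by rw [← hinv u, h])
          have k3 : f u ≠ f b := fun h => h3 (by rw [← hinv u, h, hinv b])
          have k4 : f u ≠ f x := fun h => h4 (by rw [← hinv u, h, hinv x])
          simp [swv, msw, h1, h2, h3, h4, k1, k2, k3, k4]

lemma L3 {a₀ : Fin n} (hf : Inv f) (hbx : b ≠ x) (hfbx : f b ≠ x)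
    (h1 : a₀ ≠ b) (h2 : a₀ ≠ x) (h3 : a₀ ≠ f b) (h4 : a₀ ≠ f x) :
    sw (sw f b x) (f b) (f a₀) = sw (sw f (f b) (f a₀)) (f a₀) (f x) := by
  obtain ⟨hinv, hfp⟩ := hf
  have hab : f b ≠ b := hfp b
  have hyx : f x ≠ x := hfp x
  have hyb : f x ≠ b := y_ne_b ⟨hinv, hfp⟩ hfbx
  have hay : f b ≠ f x := fun h => hbx (by rw [← hinv b, h, hinv x])
  have hpa : f a₀ ≠ a₀ := hfp a₀
  have hpb : f a₀ ≠ b := fun h => h3 (by rw [← hinv a₀, h])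
  have hpx : f a₀ ≠ x := fun h => h4 (by rw [← hinv a₀, h])
  have hpfb : f a₀ ≠ f b := fun h => h1 (by rw [← hinv a₀, h, hinv b])
  have hpfx : f a₀ ≠ f x := fun h => h2 (by rw [← hinv a₀, h, hinv x])
  have hafb : f b ≠ a₀ := h3.symm ∘ Eq.symm ∘ Eq.symm
  funext u
  by_cases k1 : u = f b
  · simp [swv, msw, k1, hinv, hfp, hbx, hfbx, hab, hyx, hyb, hay, h1, h2, h3, h4, hpa, hpb, hpx, hpfb, hpfx,
      hbx.symm, hfbx.symm, hab.symm, hyx.symm, hyb.symm, hay.symm, h1.symm, h2.symm, h3.symm, h4.symm, hpa.symm, hpb.symm, hpx.symm, hpfb.symm, hpfx.symm]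
  · by_cases k2 : u = f x
    · simp [swv, msw, k2, hinv, hfp, hbx, hfbx, hab, hyx, hyb, hay, h1, h2, h3, h4, hpa, hpb, hpx, hpfb, hpfx,
        hbx.symm, hfbx.symm, hab.symm, hyx.symm, hyb.symm, hay.symm, h1.symm, h2.symm, h3.symm, h4.symm, hpa.symm, hpb.symm, hpx.symm, hpfb.symm, hpfx.symm]
    · by_cases k3 : u = b
      · simp [swv, msw, k3, hinv, hfp, hbx, hfbx, hab, hyx, hyb, hay, h1, h2, h3, h4, hpa, hpb, hpx, hpfb, hpfx,
          hbx.symm, hfbx.symm, hab.symm, hyx.symm, hyb.symm, hay.symm, h1.symm, h2.symm, h3.symm, h4.symm, hpa.symm, hpb.symm, hpx.symm, hpfb.symm, hpfx.symm]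
      · by_cases k4 : u = x
        · simp [swv, msw, k4, hinv, hfp, hbx, hfbx, hab, hyx, hyb, hay, h1, h2, h3, h4, hpa, hpb, hpx, hpfb, hpfx,
            hbx.symm, hfbx.symm, hab.symm, hyx.symm, hyb.symm, hay.symm, h1.symm, h2.symm, h3.symm, h4.symm, hpa.symm, hpb.symm, hpx.symm, hpfb.symm, hpfx.symm]
        · by_cases k5 : u = a₀
          · simp [swv, msw, k5, hinv, hfp, hbx, hfbx, hab, hyx, hyb, hay, h1, h2, h3, h4, hpa, hpb, hpx, hpfb, hpfx,
              hbx.symm, hfbx.symm, hab.symm, hyx.symm, hyb.symm, hay.symm, h1.symm, h2.symm, h3.symm, h4.symm, hpa.symm, hpb.symm, hpx.symm, hpfb.symm, hpfx.symm]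
          · by_cases k6 : u = f a₀
            · simp [swv, msw, k6, hinv, hfp, hbx, hfbx, hab, hyx, hyb, hay, h1, h2, h3, h4, hpa, hpb, hpx, hpfb, hpfx,
                hbx.symm, hfbx.symm, hab.symm, hyx.symm, hyb.symm, hay.symm, h1.symm, h2.symm, h3.symm, h4.symm, hpa.symm, hpb.symm, hpx.symm, hpfb.symm, hpfx.symm]
            · have m1 : f u ≠ b := fun h => k1 (by rw [← hinv u, h])
              have m2 : f u ≠ x := fun h => k2 (by rw [← hinv u, h])
              have m3 : f u ≠ f b := fun h => k3 (by rw [← hinv u, h, hinv b])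
              have m4 : f u ≠ f x := fun h => k4 (by rw [← hinv u, h, hinv x])
              have m5 : f u ≠ a₀ := fun h => k6 (by rw [← hinv u, h])
              have m6 : f u ≠ f a₀ := fun h => k5 (by rw [← hinv u, h, hinv a₀])
              simp [swv, msw, k1, k2, k3, k4, k5, k6, m1, m2, m3, m4, m5, m6]

end fourb

lemma sw_sw_congr {g : Fin n → Fin n} {c d c' d' e e' k k' : Fin n}
    (h : ∀ u, msw c' d' (msw c d u) = msw k k' (msw e e' u)) :
    sw (sw g c d) c' d' = sw (sw g e e') k k' := by
  have hrev : ∀ u, msw c d (msw c' d' u) = msw e e' (msw k k' u) := by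
    intro u
    have h2 := h (msw c d (msw c' d' u))
    rw [msw_invol, msw_invol] at h2
    have h3 := congrArg (msw k k') h2
    rw [msw_invol] at h3
    have h4 := congrArg (msw e e') h3
    rw [msw_invol] at h4
    exact h4.symm
  funext u
  rw [swv, swv, swv, swv, hrev u, h]

end Stmt8

namespace Stmt8
variable {n : ℕ}

section helpers
variable {a₀ b₀ b x : Fin n} {f : Fin n → Fin n}

lemma helperB (hf : Inv f) (hbx : b ≠ x) (hfbx : f b ≠ x)
    (h1 : a₀ ≠ b) (h2 : a₀ ≠ x) (h3 : a₀ ≠ f b) (h4 : a₀ ≠ f x) :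
    MatchAdj (mkM (sw f b (f a₀))) (mkM (sw (sw f b x) b (f a₀))) := by
  have hinv := hf.1
  have hpb : f a₀ ≠ b := fun h => h3 (by rw [← hinv a₀, h])
  have hpx : f a₀ ≠ x := fun h => h4 (by rw [← hinv a₀, h])
  have idb : ∀ u, msw b (f a₀) (msw b x u) = msw (f a₀) x (msw b (f a₀) u) := by
    intro u; unfold msw; split_ifs <;> simp_all
  rw [sw_sw_congr idb]
  have hval : sw f b (f a₀) (f a₀) = f b := by
    rw [swv, msw_right, msw_other (hf.2 b) (fun h => h1 (by rw [← hinv a₀, ← h, hinv b]))]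
  exact matchAdj_sw (hf.sw b (f a₀)) hpx (by rw [hval]; exact hfbx)

lemma helperA (hf : Inv f) (hbx : b ≠ x) (hfbx : f b ≠ x)
    (h1 : a₀ ≠ b) (h2 : a₀ ≠ x) (h3 : a₀ ≠ f b) (h4 : a₀ ≠ f x) :
    MatchAdj (mkM (sw f (f b) (f a₀))) (mkM (sw (sw f b x) (f b) (f a₀))) := by
  have hinv := hf.1
  have hpy : f a₀ ≠ f x := fun h => h2 (by rw [← hinv a₀, h, hinv x])
  have hbfb : b ≠ f b := fun h => hf.2 b h.symm
  have hbp : b ≠ f a₀ := fun h => h3 (by rw [← hinv a₀, ← h])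
  rw [L3 hf hbx hfbx h1 h2 h3 h4]
  have hval : sw f (f b) (f a₀) (f a₀) = b := by
    rw [swv, msw_right, hinv b, msw_other hbfb hbp]
  refine matchAdj_sw (hf.sw (f b) (f a₀)) hpy (by rw [hval]; exact fun h => (y_ne_b hf hfbx) h.symm)

lemma case4out (hf : Inv f) (hbx : b ≠ x) (hfbx : f b ≠ x)
    (hP1 : f a₀ ≠ b₀) (hP2 : sw f b x a₀ ≠ b₀) (hab : a₀ ≠ b₀)
    (h1 : a₀ ≠ b) (h2 : a₀ ≠ x) (h3 : a₀ ≠ f b) (h4 : a₀ ≠ f x) :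
    MatchAdj (mkM (Ff a₀ b₀ f)) (mkM (Ff a₀ b₀ (sw f b x))) := by
  have hinv := hf.1
  rw [Ff_nid hP1, Ff_nid hP2, sw_other hf hfbx h1 h2 h3 h4]
  have hpb : f a₀ ≠ b := fun h => h3 (by rw [← hinv a₀, h])
  have hpx : f a₀ ≠ x := fun h => h4 (by rw [← hinv a₀, h])
  have hpfb : f a₀ ≠ f b := fun h => h1 (by rw [← hinv a₀, h, hinv b])
  have hpfx : f a₀ ≠ f x := fun h => h2 (by rw [← hinv a₀, h, hinv x])
  by_cases hb1 : b₀ = b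
  · subst hb1; exact helperB hf hbx hfbx h1 h2 h3 h4
  · by_cases hb2 : b₀ = x
    · subst hb2
      have := helperB (a₀ := a₀) (b := b₀) (x := b) hf hbx.symm (y_ne_b hf hfbx) h2 h1 h4 h3
      rwa [sw_symm f b₀ b] at this
    · by_cases hb3 : b₀ = f b
      · subst hb3; exact helperA hf hbx hfbx h1 h2 h3 h4
      · by_cases hb4 : b₀ = f x
        · subst hb4
          have := helperA (a₀ := a₀) (b := x) (x := b) hf hbx.symm (y_ne_b hf hfbx) h2 h1 h4 h3
          rwa [sw_symm f x b] at this
        · -- b₀ outside the 4-cycle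
          have hcomm : ∀ u, msw b₀ (f a₀) (msw b x u) = msw b x (msw b₀ (f a₀) u) :=
            fun u => msw_comm (b := b₀) (x := f a₀) (c := b) (d := x) hb1 hb2 hpb hpx u
          rw [sw_sw_congr hcomm]
          have hval : sw f b₀ (f a₀) b = f b := by
            rw [swv, msw_other (fun h => hb1 h.symm) hpb.symm,
              msw_other (fun h => hb3 h.symm) hpfb.symm]
          exact matchAdj_sw (hf.sw b₀ (f a₀)) hbx (by rw [hval]; exact hfbx)
end helpers
end Stmt8

namespace Stmt8
variable {n : ℕ}

lemma MatchAdj.symm' {M₁ M₂ : SimpleGraph (Fin n)} (h : MatchAdj M₁ M₂) : MatchAdj M₂ M₁ :=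
  ⟨h.1.symm, by rw [symmDiff_comm]; exact h.2⟩

/-- The key lemma: applying the edge-forcing map to two adjacent matchings yields
equal or adjacent matchings. -/
lemma key {a₀ b₀ : Fin n} (hab : a₀ ≠ b₀) {f g : Fin n → Fin n} (hf : Inv f) (hg : Inv g)
    (hadj : MatchAdj (mkM f) (mkM g)) :
    Ff a₀ b₀ f = Ff a₀ b₀ g ∨ MatchAdj (mkM (Ff a₀ b₀ f)) (mkM (Ff a₀ b₀ g)) := by
  obtain ⟨b, x, hbx, hfbx, rfl⟩ := matchAdj_structure hf hg hadj
  have hinv := hf.1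
  by_cases hP1 : f a₀ = b₀ <;> by_cases hP2 : sw f b x a₀ = b₀
  · right; rwa [Ff_id hP1, Ff_id hP2]
  · left; rw [Ff_id hP1, collapse hf hbx hfbx hP1 hP2]
  · left
    rw [Ff_id hP2]
    have hc := collapse (f := sw f b x) (b := b) (x := x) (hf.sw b x) hbx
      (by rw [sw_b hf hfbx]; exact hf.2 x) hP2 (by rw [sw_sw]; exact hP1)
    rwa [sw_sw] at hc
  · -- neither matching contains the forced edge
    by_cases haS : a₀ = b ∨ a₀ = x ∨ a₀ = f b ∨ a₀ = f x
    · by_cases hbS : b₀ = b ∨ b₀ = x ∨ b₀ = f b ∨ b₀ = f x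
      · -- both endpoints on the 4-cycle
        left
        rcases haS with ha | ha | ha | ha
        · -- a₀ = b : must have b₀ = x
          rcases hbS with kb | kb | kb | kb
          · exact absurd (ha.trans kb.symm) hab
          · rw [ha, kb, Ff_nid hfbx, Ff_nid (by rw [sw_b hf hfbx]; exact hf.2 x),
              sw_b hf hfbx]
            exact L2 hf hbx hfbx
          · exact absurd (by rw [ha, kb]) hP1
          · exact absurd (by rw [ha, kb, sw_b hf hfbx]) hP2
        · -- a₀ = x : must have b₀ = b
          rcases hbS with kb | kb | kb | kb
          · rw [ha, kb, Ff_nid (y_ne_b hf hfbx), Ff_nid (by rw [sw_x hf hfbx]; exact hf.2 b),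
              sw_x hf hfbx]
            have hl2 := L2 (b := x) (x := b) hf hbx.symm (y_ne_b hf hfbx)
            rwa [sw_symm f x b] at hl2
          · exact absurd (ha.trans kb.symm) hab
          · exact absurd (by rw [ha, kb, sw_x hf hfbx]) hP2
          · exact absurd (by rw [ha, kb]) hP1
        · -- a₀ = f b : must have b₀ = f x
          rcases hbS with kb | kb | kb | kb
          · exact absurd (by rw [ha, kb, hinv b]) hP1
          · exact absurd (by rw [ha, kb, sw_a hf hfbx]) hP2
          · exact absurd (ha.trans kb.symm) hab
          · rw [ha, kb, Ff_nid (by rw [hinv b]; exact fun h => (y_ne_b hf hfbx) h.symm),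
              Ff_nid (by rw [sw_a hf hfbx]; exact fun h => hf.2 x h.symm),
              sw_a hf hfbx, hinv b]
            exact L1 hf hbx hfbx
        · -- a₀ = f x : must have b₀ = f b
          rcases hbS with kb | kb | kb | kb
          · exact absurd (by rw [ha, kb, sw_y hf hfbx]) hP2
          · exact absurd (by rw [ha, kb, hinv x]) hP1
          · rw [ha, kb, Ff_nid (by rw [hinv x]; exact fun h => hfbx h.symm),
              Ff_nid (by rw [sw_y hf hfbx]; exact fun h => hf.2 b h.symm),
              sw_y hf hfbx, hinv x]
            have hl1 := L1 (b := x) (x := b) hf hbx.symm (y_ne_b hf hfbx)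
            rwa [sw_symm f x b] at hl1
          · exact absurd (ha.trans kb.symm) hab
      · -- b₀ off the 4-cycle: symmetrize
        push_neg at hbS
        obtain ⟨k1, k2, k3, k4⟩ := hbS
        right
        rw [Ff_comm hf hab, Ff_comm (hf.sw b x) hab]
        exact case4out hf hbx hfbx (fun h => hP1 (by rw [← h, hinv b₀]))
          (fun h => hP2 (by rw [← h, (hf.sw b x).1 b₀])) hab.symm k1 k2 k3 k4
    · push_neg at haS
      obtain ⟨h1, h2, h3, h4⟩ := haS
      right; exact case4out hf hbx hfbx hP1 hP2 hab h1 h2 h3 h4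

end Stmt8

namespace Stmt8

variable {m : ℕ}

/-- the edge-forcing map on vertices of the matching graph -/
noncomputable def pmF (a₀ b₀ : Fin (2*m)) (N : PMVertex m) : PMVertex m :=
  ⟨mkM (Ff a₀ b₀ (pf N.1 N.2)), mkM_pm (Ff_inv (pf_inv N.2))⟩

lemma pmF_fix {a₀ b₀ : Fin (2*m)} {N : PMVertex m} (h : N.1.Adj a₀ b₀) :
    pmF a₀ b₀ N = N := by
  apply Subtype.ext
  show mkM (Ff a₀ b₀ (pf N.1 N.2)) = N.1
  rw [Ff_id (adj_pf N.2 h), mkM_pf]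

lemma adj_transfer {N₁ N₂ : PMVertex m} (h : (matchingGraph m).Adj N₁ N₂) :
    MatchAdj (mkM (pf N₁.1 N₁.2)) (mkM (pf N₂.1 N₂.2)) := by
  rw [mkM_pf, mkM_pf]; exact h

lemma key' {a₀ b₀ : Fin (2*m)} (hab : a₀ ≠ b₀) {N₁ N₂ : PMVertex m}
    (h : (matchingGraph m).Adj N₁ N₂) :
    pmF a₀ b₀ N₁ = pmF a₀ b₀ N₂ ∨ (matchingGraph m).Adj (pmF a₀ b₀ N₁) (pmF a₀ b₀ N₂) := by
  rcases key hab (pf_inv N₁.2) (pf_inv N₂.2) (adj_transfer h) with heq | hadj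
  · exact Or.inl (Subtype.ext (congrArg mkM heq))
  · exact Or.inr hadj

lemma collapse' {a₀ b₀ : Fin (2*m)} {N₁ N₂ : PMVertex m}
    (h : (matchingGraph m).Adj N₁ N₂) (h₁ : N₁.1.Adj a₀ b₀) (h₂ : ¬ N₂.1.Adj a₀ b₀) :
    pmF a₀ b₀ N₂ = N₁ := by
  obtain ⟨b, x, hbx, hfbx, hsw⟩ :=
    matchAdj_structure (pf_inv N₁.2) (pf_inv N₂.2) (adj_transfer h)
  apply Subtype.ext
  show mkM (Ff a₀ b₀ (pf N₂.1 N₂.2)) = N₁.1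
  have hP : pf N₁.1 N₁.2 a₀ = b₀ := adj_pf N₁.2 h₁
  have hP2 : pf N₂.1 N₂.2 a₀ ≠ b₀ := fun hh => h₂ (hh ▸ pf_adj N₂.2 a₀)
  rw [hsw] at hP2 ⊢
  rw [collapse (pf_inv N₁.2) hbx hfbx hP hP2, mkM_pf]

lemma walk_desc {a₀ b₀ : Fin (2*m)} (hab : a₀ ≠ b₀) {Md : PMVertex m} :
    ∀ {N : PMVertex m} (q : (matchingGraph m).Walk N Md), Md.1.Adj a₀ b₀ →
      ∃ q' : (matchingGraph m).Walk (pmF a₀ b₀ N) Md, q'.length ≤ q.length := by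
  intro N q
  induction q with
  | nil => exact fun hMd => ⟨Walk.nil.copy (pmF_fix hMd).symm rfl, by simp⟩
  | cons h q ih =>
    intro hMd
    obtain ⟨q', hq'⟩ := ih hMd
    rcases key' hab h with heq | hadj
    · exact ⟨q'.copy heq.symm rfl, by simp; omega⟩
    · exact ⟨Walk.cons hadj q', by simp; omega⟩

lemma walk_desc_strict {a₀ b₀ : Fin (2*m)} (hab : a₀ ≠ b₀) {Md : PMVertex m} :
    ∀ {N : PMVertex m} (q : (matchingGraph m).Walk N Md), Md.1.Adj a₀ b₀ →
      (∃ M ∈ q.support, ¬ M.1.Adj a₀ b₀) →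
      ∃ q' : (matchingGraph m).Walk (pmF a₀ b₀ N) Md, q'.length < q.length := by
  intro N q
  induction q with
  | nil =>
    rintro hMd ⟨M, hMs, hMa⟩
    simp only [Walk.support_nil, List.mem_singleton] at hMs
    exact absurd (hMs ▸ hMd) hMa
  | @cons N N' _ h q ih =>
    rintro hMd ⟨M, hMs, hMa⟩
    by_cases hex : ∃ M ∈ q.support, ¬ M.1.Adj a₀ b₀
    · obtain ⟨q', hq'⟩ := ih hMd hex
      rcases key' hab h with heq | hadj
      · refine ⟨q'.copy heq.symm rfl, by simp; omega⟩
      · exact ⟨Walk.cons hadj q', by simp; omega⟩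
    · push_neg at hex
      have hMN : M = N := by
        simp only [Walk.support_cons, List.mem_cons] at hMs
        rcases hMs with rfl | hMs
        · rfl
        · exact absurd (hex M hMs) hMa
      subst hMN
      have hN' : N'.1.Adj a₀ b₀ := hex N' q.start_mem_support
      have hcol : pmF a₀ b₀ M = N' := collapse' h.symm hN' hMa
      exact ⟨q.copy hcol.symm rfl, by simp⟩

end Stmt8

open Stmt8 in
/-- Every matching on a geodesic in `𝒫ₘ` contains every edge common to the two
endpoints of the geodesic. -/
theorem stmt8 (m : ℕ) (M₀ Md : PMVertex m) (p : (matchingGraph m).Walk M₀ Md)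
    (hgeo : p.length = (matchingGraph m).dist M₀ Md) :
    ∀ M ∈ p.support, ∀ e ∈ M₀.1.edgeSet, e ∈ Md.1.edgeSet → e ∈ M.1.edgeSet := by
  intro M hM e he0 heD
  induction e with
  | _ a₀ b₀ =>
    rw [mem_edgeSet] at he0 heD ⊢
    have hab : a₀ ≠ b₀ := he0.ne
    by_contra hc
    obtain ⟨q', hq'⟩ := walk_desc_strict hab p heD ⟨M, hM, hc⟩
    have hle := SimpleGraph.dist_le (q'.copy (pmF_fix he0) rfl)
    rw [Walk.length_copy] at hle
    omega
end

section
/- Let M' and M'' be two distinct perfect matchings of K_{2m} and let e be an edge of M'' not in M'. Then M'*e is adjacent to M' in 𝒫_m and d(M'*e, M'') = d(M',M'') - 1; equivalently, there is a geodesic from M' to M'' whose first step is the insertion of e. -/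
open SimpleGraph

/-- The unique neighbor of `v` in a (perfect) matching `M`
(junk value `v` itself if `v` has no neighbor). -/
noncomputable def matchOf {V : Type*} (M : SimpleGraph V) (v : V) : V := by
  classical
  exact if h : ∃ w, M.Adj v w then h.choose else v

/-- Insertion `M * e` of an edge `e = {v₁, v₂}` into a perfect matching `M`:
if `e ∈ M` then `M * e = M`; otherwise the edges `{v₁, v₃}` and `{v₂, v₄}` of `M`
incident with `v₁` and `v₂` are deleted and the edges `{v₁, v₂}` and `{v₃, v₄}`
are added. -/
noncomputable def insertEdge {V : Type*} (M : SimpleGraph V) (e : Sym2 V) : SimpleGraph V := by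
  classical
  exact if e ∈ M.edgeSet then M
  else SimpleGraph.fromEdgeSet
    ({f | f ∈ M.edgeSet ∧ ∀ v ∈ e, v ∉ f} ∪ {e, Sym2.map (matchOf M) e})

/-- Iterated insertion `M * (e₁, …, eₙ) = (M * (e₁, …, eₙ₋₁)) * eₙ`. -/
noncomputable def insertEdges {V : Type*} (M : SimpleGraph V) (l : List (Sym2 V)) :
    SimpleGraph V :=
  l.foldl insertEdge M


set_option linter.unusedSectionVars false
set_option linter.unusedVariables false


noncomputable section AuxMG
variable {V : Type*}

/-- the graph with the single edge u-v -/
def eG (u v : V) : SimpleGraph V := fromEdgeSet {s(u,v)}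

lemma eG_adj {u v x y : V} : (eG u v).Adj x y ↔ s(x,y) = s(u,v) ∧ x ≠ y := by
  simp [eG, fromEdgeSet_adj]

lemma eG_adj' {u v : V} (h : u ≠ v) : (eG u v).Adj u v := by
  simp [eG_adj, h]

/-- number of connected components -/
def ccc (G : SimpleGraph V) : ℕ := Nat.card G.ConnectedComponent

lemma reachable_sup_eG {G : SimpleGraph V} {u v x y : V}
    (h : (G ⊔ eG u v).Reachable x y) :
    G.Reachable x y ∨ (G.Reachable x u ∧ G.Reachable v y) ∨
      (G.Reachable x v ∧ G.Reachable u y) := by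
  obtain ⟨p⟩ := h
  induction p with
  | nil => exact Or.inl (Reachable.refl _)
  | cons h p ih =>
    rename_i a b c
    rcases (sup_adj _ _ _ _).1 h with hG | hE
    · rcases ih with h1 | ⟨h1, h2⟩ | ⟨h1, h2⟩
      · exact Or.inl ((Adj.reachable hG).trans h1)
      · exact Or.inr (Or.inl ⟨(Adj.reachable hG).trans h1, h2⟩)
      · exact Or.inr (Or.inr ⟨(Adj.reachable hG).trans h1, h2⟩)
    · rw [eG_adj] at hE
      rcases Sym2.eq_iff.1 hE.1 with ⟨rfl, rfl⟩ | ⟨rfl, rfl⟩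
      · rcases ih with h1 | ⟨h1, h2⟩ | ⟨h1, h2⟩
        · exact Or.inr (Or.inl ⟨Reachable.refl _, h1⟩)
        · exact Or.inr (Or.inl ⟨Reachable.refl _, h2⟩)
        · exact Or.inl h2
      · rcases ih with h1 | ⟨h1, h2⟩ | ⟨h1, h2⟩
        · exact Or.inr (Or.inr ⟨Reachable.refl _, h1⟩)
        · exact Or.inl h2
        · exact Or.inr (Or.inr ⟨Reachable.refl _, h2⟩)

variable [Fintype V]

instance (G : SimpleGraph V) : Finite G.ConnectedComponent := by
  classical
  exact Quot.finite _

lemma map_spanning_surj {G H : SimpleGraph V} (h : G ≤ H) :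
    Function.Surjective (ConnectedComponent.map (Hom.ofLE h)) := by
  intro C
  refine C.ind fun v => ⟨G.connectedComponentMk v, ?_⟩
  rw [ConnectedComponent.map_mk]
  rfl

/-- monotonicity: more edges, fewer components -/
lemma ccc_mono {G H : SimpleGraph V} (h : G ≤ H) : ccc H ≤ ccc G :=
  Nat.card_le_card_of_surjective _ (map_spanning_surj h)

/-- adding one edge loses at most one component -/
lemma ccc_le_sup_eG_add_one (G : SimpleGraph V) (u v : V) :
    ccc G ≤ ccc (G ⊔ eG u v) + 1 := by
  classical
  set f : G.ConnectedComponent → (G ⊔ eG u v).ConnectedComponent :=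
    ConnectedComponent.map (Hom.ofLE le_sup_left) with hf
  have key : ∀ x y : V, f (G.connectedComponentMk x) = f (G.connectedComponentMk y) →
      G.Reachable x y ∨ (G.Reachable x u ∧ G.Reachable v y) ∨
        (G.Reachable x v ∧ G.Reachable u y) := by
    intro x y hxy
    apply reachable_sup_eG
    rw [hf, ConnectedComponent.map_mk, ConnectedComponent.map_mk] at hxy
    exact (ConnectedComponent.eq).1 hxy
  set g : G.ConnectedComponent → (G ⊔ eG u v).ConnectedComponent ⊕ Unit := fun C =>
    if C = G.connectedComponentMk u then Sum.inr () else Sum.inl (f C) with hg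
  have hginj : Function.Injective g := by
    intro C D hCD
    by_cases hC : C = G.connectedComponentMk u <;> by_cases hD : D = G.connectedComponentMk u
    · exact hC.trans hD.symm
    · simp [hg, hC, hD] at hCD
    · simp [hg, hC, hD] at hCD
    · rw [hg] at hCD
      simp only [if_neg hC, if_neg hD, Sum.inl.injEq] at hCD
      obtain ⟨x, rfl⟩ := C.exists_rep
      obtain ⟨y, rfl⟩ := D.exists_rep
      rcases key x y hCD with h1 | ⟨h1, h2⟩ | ⟨h1, h2⟩
      · exact ConnectedComponent.sound h1
      · exact absurd (ConnectedComponent.sound h1) hC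
      · exact absurd (ConnectedComponent.sound h2.symm) hD
  calc ccc G ≤ Nat.card ((G ⊔ eG u v).ConnectedComponent ⊕ Unit) :=
        Nat.card_le_card_of_injective g hginj
    _ = ccc (G ⊔ eG u v) + 1 := by rw [Nat.card_sum]; simp [ccc]

/-- adding an edge between reachable vertices keeps (at least) the component count -/
lemma ccc_le_sup_eG_of_reachable {G : SimpleGraph V} {u v : V} (h : G.Reachable u v) :
    ccc G ≤ ccc (G ⊔ eG u v) := by
  apply Nat.card_le_card_of_injective
    (ConnectedComponent.map (Hom.ofLE le_sup_left))
  intro C D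
  refine C.ind fun x => D.ind fun y hxy => ?_
  rw [ConnectedComponent.map_mk, ConnectedComponent.map_mk] at hxy
  rcases reachable_sup_eG ((ConnectedComponent.eq).1 hxy) with h1 | ⟨h1, h2⟩ | ⟨h1, h2⟩
  · exact ConnectedComponent.sound h1
  · exact ConnectedComponent.sound (h1.trans (h.trans h2))
  · exact ConnectedComponent.sound (h1.trans (h.symm.trans h2))

/-- adding an edge between non-reachable vertices strictly decreases the count -/
lemma ccc_sup_eG_add_one_le {G : SimpleGraph V} {u v : V} (hne : u ≠ v)
    (h : ¬ G.Reachable u v) : ccc (G ⊔ eG u v) + 1 ≤ ccc G := by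
  classical
  have : ccc (G ⊔ eG u v) < ccc G := by
    rw [ccc, ccc, Nat.card_eq_fintype_card, Nat.card_eq_fintype_card]
    apply Fintype.card_lt_of_surjective_not_injective
      (ConnectedComponent.map (Hom.ofLE le_sup_left))
    · exact map_spanning_surj _
    · intro hinj
      apply h
      have := hinj (a₁ := G.connectedComponentMk u) (a₂ := G.connectedComponentMk v) ?_
      · exact (ConnectedComponent.eq).1 this
      · rw [ConnectedComponent.map_mk, ConnectedComponent.map_mk]
        exact ConnectedComponent.sound (Adj.reachable (by simp [sup_adj, eG_adj', hne]))
  omega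

end AuxMG

section Matching
variable {V : Type*} {M : SimpleGraph V}

def IsPM (M : SimpleGraph V) : Prop := ∀ v, ∃! w, M.Adj v w

lemma matchOf_adj (hM : IsPM M) (v : V) : M.Adj v (matchOf M v) := by
  obtain ⟨w, hw, -⟩ := hM v
  unfold matchOf
  rw [dif_pos ⟨w, hw⟩]
  exact Exists.choose_spec ⟨w, hw⟩

lemma eq_matchOf (hM : IsPM M) {v w : V} (h : M.Adj v w) : w = matchOf M v :=
  ((hM v).unique h (matchOf_adj hM v))

lemma matchOf_matchOf (hM : IsPM M) (v : V) : matchOf M (matchOf M v) = v :=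
  (eq_matchOf hM (matchOf_adj hM v).symm).symm

lemma adj_iff_matchOf (hM : IsPM M) {v w : V} : M.Adj v w ↔ w = matchOf M v :=
  ⟨eq_matchOf hM, fun h => h ▸ matchOf_adj hM v⟩

variable {v1 v2 : V} (hM : IsPM M) (h12 : v1 ≠ v2) (hA : ¬ M.Adj v1 v2)

local notation "v3" => matchOf M v1
local notation "v4" => matchOf M v2
local notation "N" => insertEdge M s(v1,v2)

include hM h12 hA

lemma hne13 : v1 ≠ v3 := (matchOf_adj hM v1).ne
lemma hne24 : v2 ≠ v4 := (matchOf_adj hM v2).ne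
lemma hne14 : v1 ≠ v4 := fun h => hA (h ▸ (matchOf_adj hM v2).symm)
lemma hne23 : v2 ≠ v3 := fun h => hA (h ▸ (matchOf_adj hM v1))
lemma hne34 : v3 ≠ v4 := by
  intro h
  apply h12
  have := matchOf_matchOf hM v1
  rw [h] at this
  rw [← this, matchOf_matchOf hM]

lemma insertEdge_adj {x y : V} :
    (N).Adj x y ↔
      (M.Adj x y ∧ x ≠ v1 ∧ x ≠ v2 ∧ y ≠ v1 ∧ y ≠ v2) ∨
      ((s(x,y) = s(v1,v2) ∨ s(x,y) = s(v3,v4)) ∧ x ≠ y) := by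
  have he : s(v1,v2) ∉ M.edgeSet := by rwa [mem_edgeSet]
  unfold insertEdge
  rw [if_neg he, fromEdgeSet_adj]
  simp only [Set.mem_union, Set.mem_setOf_eq, Set.mem_insert_iff, Set.mem_singleton_iff,
    Sym2.map_pair_eq, mem_edgeSet, Sym2.ball, Sym2.mem_iff, not_or]
  constructor
  · rintro ⟨⟨hMxy, hall⟩ | h2, hxy⟩
    · obtain ⟨ha, hb⟩ := hall v1 (Or.inl rfl)
      obtain ⟨hc, hd⟩ := hall v2 (Or.inr rfl)
      exact Or.inl ⟨hMxy, Ne.symm ha, Ne.symm hc, Ne.symm hb, Ne.symm hd⟩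
    · exact Or.inr ⟨h2, hxy⟩
  · rintro (⟨h1, hx1, hx2, hy1, hy2⟩ | ⟨h2, hxy⟩)
    · refine ⟨Or.inl ⟨h1, fun v hv => ?_⟩, h1.ne⟩
      rcases hv with rfl | rfl
      · exact ⟨Ne.symm hx1, Ne.symm hy1⟩
      · exact ⟨Ne.symm hx2, Ne.symm hy2⟩
    · exact ⟨Or.inr h2, hxy⟩

lemma insertEdge_adj_12 : (N).Adj v1 v2 := by
  rw [insertEdge_adj hM h12 hA]
  exact Or.inr ⟨Or.inl rfl, h12⟩

lemma insertEdge_adj_34 : (N).Adj (v3) (v4) := by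
  rw [insertEdge_adj hM h12 hA]
  exact Or.inr ⟨Or.inr rfl, hne34 hM h12 hA⟩

/-- the matching candidate in `N` -/
private noncomputable def cand (M : SimpleGraph V) (v1 v2 v : V) : V :=
  open scoped Classical in
  if v = v1 then v2 else if v = v2 then v1 else if v = matchOf M v1 then matchOf M v2
    else if v = matchOf M v2 then matchOf M v1 else matchOf M v

lemma insertEdge_isPM : IsPM (N) := by
  have d13 := hne13 hM h12 hA
  have d24 := hne24 hM h12 hA
  have d14 := hne14 hM h12 hA
  have d23 := hne23 hM h12 hA
  have d34 := hne34 hM h12 hA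
  have hiff := fun x y => insertEdge_adj hM h12 hA (x := x) (y := y)
  intro v
  refine ⟨cand M v1 v2 v, ?_, ?_⟩
  · unfold cand
    split_ifs with h1 h2 h3 h4
    · rw [h1]; exact insertEdge_adj_12 hM h12 hA
    · rw [h2]; exact (insertEdge_adj_12 hM h12 hA).symm
    · rw [h3]; exact insertEdge_adj_34 hM h12 hA
    · rw [h4]; exact (insertEdge_adj_34 hM h12 hA).symm
    · show (insertEdge M s(v1,v2)).Adj v (matchOf M v)
      rw [hiff]
      refine Or.inl ⟨matchOf_adj hM v, h1, h2, fun h => ?_, fun h => ?_⟩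
      · apply h3
        rw [← matchOf_matchOf hM v, h]
      · apply h4
        rw [← matchOf_matchOf hM v, h]
  · intro y hy
    rw [hiff] at hy
    unfold cand
    rcases hy with ⟨hMa, hv1, hv2, hy1, hy2⟩ | ⟨hs | hs, hvy⟩
    · rw [if_neg hv1, if_neg hv2]
      have hy3 : y = matchOf M v := eq_matchOf hM hMa
      have hv3 : v ≠ v3 := by
        intro h
        apply hy1
        rw [hy3, h, matchOf_matchOf hM]
      have hv4 : v ≠ v4 := by
        intro h
        apply hy2
        rw [hy3, h, matchOf_matchOf hM]
      rw [if_neg hv3, if_neg hv4, hy3]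
    · rcases Sym2.eq_iff.1 hs with ⟨rfl, rfl⟩ | ⟨rfl, rfl⟩
      · rw [if_pos rfl]
      · rw [if_neg h12.symm, if_pos rfl]
    · rcases Sym2.eq_iff.1 hs with ⟨rfl, rfl⟩ | ⟨rfl, rfl⟩
      · rw [if_neg d13.symm, if_neg d23.symm, if_pos rfl]
      · rw [if_neg d14.symm, if_neg d24.symm, if_neg d34.symm, if_pos rfl]

lemma not_insertEdge_adj_13 : ¬ (N).Adj v1 (v3) := by
  intro h
  exact hne23 hM h12 hA (((insertEdge_isPM hM h12 hA v1).unique h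
    (insertEdge_adj_12 hM h12 hA)).symm)

lemma not_insertEdge_adj_24 : ¬ (N).Adj v2 (v4) := by
  intro h
  exact (hne14 hM h12 hA) (((insertEdge_isPM hM h12 hA v2).unique h
    (insertEdge_adj_12 hM h12 hA).symm).symm)

lemma not_M_adj_34 : ¬ M.Adj (v3) (v4) := by
  intro h
  have := eq_matchOf hM h
  rw [matchOf_matchOf hM] at this
  exact hne14 hM h12 hA this.symm

lemma symmDiff_insertEdge_adj {x y : V} :
    (symmDiff M (N)).Adj x y ↔
      ((s(x,y) = s(v1,v2) ∨ s(x,y) = s(v3,v4) ∨ s(x,y) = s(v1,v3) ∨ s(x,y) = s(v2,v4))) := by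
  have d13 := hne13 hM h12 hA
  have d24 := hne24 hM h12 hA
  have d14 := hne14 hM h12 hA
  have d23 := hne23 hM h12 hA
  have d34 := hne34 hM h12 hA
  have hiff := fun x y => insertEdge_adj hM h12 hA (x := x) (y := y)
  rw [symmDiff_def]
  simp only [SimpleGraph.sup_adj, SimpleGraph.sdiff_adj]
  constructor
  · rintro (⟨h1, h2⟩ | ⟨h1, h2⟩)
    · rw [hiff] at h2
      push_neg at h2
      obtain ⟨h3, -⟩ := h2
      by_cases hx1 : x = v1
      · subst hx1
        rw [(eq_matchOf hM h1)]
        exact Or.inr (Or.inr (Or.inl rfl))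
      by_cases hx2 : x = v2
      · subst hx2
        rw [(eq_matchOf hM h1)]
        exact Or.inr (Or.inr (Or.inr rfl))
      by_cases hy1 : y = v1
      · subst hy1
        rw [Sym2.eq_swap, (eq_matchOf hM h1.symm)]
        exact Or.inr (Or.inr (Or.inl rfl))
      by_cases hy2 : y = v2
      · subst hy2
        rw [Sym2.eq_swap, (eq_matchOf hM h1.symm)]
        exact Or.inr (Or.inr (Or.inr rfl))
      · exact absurd (h3 h1 hx1 hx2 hy1) hy2
    · rw [hiff] at h1
      rcases h1 with ⟨h3, -⟩ | ⟨h3 | h3, -⟩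
      · exact absurd h3 h2
      · exact Or.inl h3
      · exact Or.inr (Or.inl h3)
  · intro h
    have hMs : ∀ a b : V, s(a,b) = s(v1,v2) ∨ s(a,b) = s(v3,v4) → (N).Adj a b ∧ ¬ M.Adj a b := by
      intro a b hab
      constructor
      · rw [hiff]
        refine Or.inr ⟨hab, ?_⟩
        rcases hab with hab | hab <;> rcases Sym2.eq_iff.1 hab with ⟨rfl, rfl⟩ | ⟨rfl, rfl⟩
        · exact h12
        · exact h12.symm
        · exact d34
        · exact d34.symm
      · rw [← mem_edgeSet]
        rcases hab with hab | hab <;> rw [hab, mem_edgeSet]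
        · exact hA
        · exact not_M_adj_34 hM h12 hA
    rcases h with hs | hs | hs | hs
    · exact Or.inr ((hMs x y) (Or.inl hs))
    · exact Or.inr ((hMs x y) (Or.inr hs))
    · rcases Sym2.eq_iff.1 hs with ⟨rfl, rfl⟩ | ⟨rfl, rfl⟩
      · exact Or.inl ⟨matchOf_adj hM x, not_insertEdge_adj_13 hM h12 hA⟩
      · exact Or.inl ⟨(matchOf_adj hM y).symm, fun hc => not_insertEdge_adj_13 hM h12 hA hc.symm⟩
    · rcases Sym2.eq_iff.1 hs with ⟨rfl, rfl⟩ | ⟨rfl, rfl⟩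
      · exact Or.inl ⟨matchOf_adj hM x, not_insertEdge_adj_24 hM h12 hA⟩
      · exact Or.inl ⟨(matchOf_adj hM y).symm, fun hc => not_insertEdge_adj_24 hM h12 hA hc.symm⟩

end Matching


section Cycle4
variable {V : Type*} {M : SimpleGraph V} {v1 v2 : V}
  (hM : IsPM M) (h12 : v1 ≠ v2) (hA : ¬ M.Adj v1 v2)

local notation "v3" => matchOf M v1
local notation "v4" => matchOf M v2
local notation "N" => insertEdge M s(v1,v2)

include hM h12 hA

lemma insertEdge_ne : M ≠ N := by
  intro h
  have := insertEdge_adj_12 hM h12 hA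
  rw [← h] at this
  exact hA this

lemma insertEdge_cycle4 : IsCycleGraphOfLength (symmDiff M (N)) 4 := by
  have d13 := hne13 hM h12 hA
  have d24 := hne24 hM h12 hA
  have d14 := hne14 hM h12 hA
  have d23 := hne23 hM h12 hA
  have d34 := hne34 hM h12 hA
  have hΔ := fun x y => symmDiff_insertEdge_adj hM h12 hA (x := x) (y := y)
  have h1 : (symmDiff M (N)).Adj v1 v2 := by rw [hΔ]; tauto
  have h2 : (symmDiff M (N)).Adj v2 (v4) := by rw [hΔ]; tauto
  have h3 : (symmDiff M (N)).Adj (v4) (v3) := by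
    rw [hΔ, Sym2.eq_swap (a := v4)]; tauto
  have h4 : (symmDiff M (N)).Adj (v3) v1 := by
    rw [hΔ, Sym2.eq_swap (a := v3)]; tauto
  refine ⟨v1, Walk.cons h1 (Walk.cons h2 (Walk.cons h3 (Walk.cons h4 Walk.nil))), ?_, by simp, ?_⟩
  · constructor
    · constructor
      · constructor
        simp only [Walk.edges_cons, Walk.edges_nil, List.nodup_cons, List.mem_cons,
          List.not_mem_nil, List.nodup_nil, Sym2.eq_iff, or_false, and_true, not_or]
        push_neg
        tauto
      · simp
    · simp only [Walk.support_cons, Walk.support_nil, List.tail_cons, List.nodup_cons,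
        List.mem_cons, List.not_mem_nil, List.nodup_nil, or_false, and_true, not_or]
      push_neg
      tauto
  · intro e he
    revert he
    refine Sym2.ind (fun x y he => ?_) e
    rw [mem_edgeSet, hΔ] at he
    simp only [Walk.edges_cons, Walk.edges_nil, List.mem_cons, List.not_mem_nil, or_false]
    rcases he with h | h | h | h
    · tauto
    · rw [h]
      exact Or.inr (Or.inr (Or.inl Sym2.eq_swap))
    · rw [h]
      exact Or.inr (Or.inr (Or.inr Sym2.eq_swap))
    · tauto

end Cycle4

section Extract
variable {V : Type*} {M1 M2 : SimpleGraph V}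

lemma symmDiff_adj_iff {x y : V} : (symmDiff M1 M2).Adj x y ↔
    (M1.Adj x y ∧ ¬ M2.Adj x y) ∨ (M2.Adj x y ∧ ¬ M1.Adj x y) := by
  rw [symmDiff_def]
  simp

lemma adj_of_sym2_eq {x y u v : V} (h : s(x,y) = s(u,v)) (hxy : M1.Adj x y) :
    M1.Adj u v := by
  rcases Sym2.eq_iff.1 h with ⟨hx, hy⟩ | ⟨hx, hy⟩
  · exact hx ▸ hy ▸ hxy
  · exact hx ▸ hy ▸ hxy.symm

/-- structure of a 4-cycle symmetric difference, given the side of one edge -/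
lemma extract_core (h1 : IsPM M1) (h2 : IsPM M2) {a b c d : V}
    (ha1 : (symmDiff M1 M2).Adj a b) (ha2 : (symmDiff M1 M2).Adj b c)
    (ha3 : (symmDiff M1 M2).Adj c d) (ha4 : (symmDiff M1 M2).Adj d a)
    (nac : a ≠ c) (nbd : b ≠ d)
    (hcov : ∀ x y : V, (symmDiff M1 M2).Adj x y →
      s(x,y) = s(a,b) ∨ s(x,y) = s(b,c) ∨ s(x,y) = s(c,d) ∨ s(x,y) = s(d,a))
    (hside : M1.Adj a b) :
    M1.Adj a b ∧ M1.Adj c d ∧ M2.Adj b c ∧ M2.Adj d a ∧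
      (∀ x y, M1.Adj x y → M2.Adj x y ∨ s(x,y) = s(a,b) ∨ s(x,y) = s(c,d)) ∧
      (∀ x y, M2.Adj x y → M1.Adj x y ∨ s(x,y) = s(b,c) ∨ s(x,y) = s(d,a)) := by
  have hbc : M2.Adj b c := by
    rcases symmDiff_adj_iff.1 ha2 with ⟨h, -⟩ | ⟨h, -⟩
    · exact absurd ((h1 b).unique h hside.symm) (Ne.symm nac)
    · exact h
  have hcd : M1.Adj c d := by
    rcases symmDiff_adj_iff.1 ha3 with ⟨h, -⟩ | ⟨h, -⟩
    · exact h
    · exact absurd ((h2 c).unique h hbc.symm) (Ne.symm nbd)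
  have hda : M2.Adj d a := by
    rcases symmDiff_adj_iff.1 ha4 with ⟨h, -⟩ | ⟨h, -⟩
    · exact absurd ((h1 d).unique h hcd.symm) nac
    · exact h
  refine ⟨hside, hcd, hbc, hda, ?_, ?_⟩
  · intro x y hxy
    by_cases hM2 : M2.Adj x y
    · exact Or.inl hM2
    rcases hcov x y (symmDiff_adj_iff.2 (Or.inl ⟨hxy, hM2⟩)) with h | h | h | h
    · exact Or.inr (Or.inl h)
    · exact absurd ((h1 b).unique (adj_of_sym2_eq h hxy) hside.symm) (Ne.symm nac)
    · exact Or.inr (Or.inr h)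
    · exact absurd ((h1 d).unique (adj_of_sym2_eq h hxy) hcd.symm) nac
  · intro x y hxy
    by_cases hM1 : M1.Adj x y
    · exact Or.inl hM1
    have hxy' : M2.Adj x y := hxy
    rcases hcov x y (symmDiff_adj_iff.2 (Or.inr ⟨hxy, hM1⟩)) with h | h | h | h
    · exact absurd ((h2 a).unique (adj_of_sym2_eq (M1 := M2) h hxy) hda.symm) nbd
    · exact Or.inr (Or.inl h)
    · exact absurd ((h2 c).unique (adj_of_sym2_eq (M1 := M2) h hxy) hbc.symm) (Ne.symm nbd)
    · exact Or.inr (Or.inr h)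

lemma cycle4_extract (h1 : IsPM M1) (h2 : IsPM M2)
    (hc : IsCycleGraphOfLength (symmDiff M1 M2) 4) :
    ∃ a b c d : V, a ≠ b ∧ a ≠ c ∧ a ≠ d ∧ b ≠ c ∧ b ≠ d ∧ c ≠ d ∧
      M1.Adj a b ∧ M1.Adj c d ∧ M2.Adj b c ∧ M2.Adj d a ∧
      (∀ x y, M1.Adj x y → M2.Adj x y ∨ s(x,y) = s(a,b) ∨ s(x,y) = s(c,d)) ∧
      (∀ x y, M2.Adj x y → M1.Adj x y ∨ s(x,y) = s(b,c) ∨ s(x,y) = s(d,a)) := by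
  obtain ⟨v, p, hcyc, hlen, hcov⟩ := hc
  cases p with
  | nil => simp at hlen
  | cons ha1 p =>
  cases p with
  | nil => simp at hlen
  | cons ha2 p =>
  cases p with
  | nil => simp at hlen
  | cons ha3 p =>
  cases p with
  | nil => simp at hlen
  | cons ha4 p =>
  cases p with
  | cons _ p => simp at hlen
  | nil =>
  rename_i b c d
  -- vertices of the cycle: v, b, c, d
  have hnd := hcyc.support_nodup
  simp only [Walk.support_cons, Walk.support_nil, List.tail_cons, List.nodup_cons,
    List.mem_cons, List.mem_singleton, List.not_mem_nil, or_false, List.nodup_nil,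
    and_true, not_or] at hnd
  obtain ⟨⟨nbc, nbd, nbv⟩, ⟨ncd, ncv⟩, ndv, -⟩ := hnd
  have vb : v ≠ b := fun h => nbv h.symm
  have vc : v ≠ c := fun h => ncv h.symm
  have vd : v ≠ d := fun h => ndv h.symm
  have hcov' : ∀ x y : V, (symmDiff M1 M2).Adj x y →
      s(x,y) = s(v,b) ∨ s(x,y) = s(b,c) ∨ s(x,y) = s(c,d) ∨ s(x,y) = s(d,v) := by
    intro x y hxy
    have := hcov s(x,y) ((mem_edgeSet _).2 hxy)
    simpa using this
  rcases symmDiff_adj_iff.1 ha1 with ⟨hside, -⟩ | ⟨hside, -⟩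
  · obtain ⟨c1, c2, c3, c4, c5, c6⟩ :=
      extract_core h1 h2 ha1 ha2 ha3 ha4 vc nbd hcov' hside
    exact ⟨v, b, c, d, vb, vc, vd, nbc, nbd, ncd,
      c1, c2, c3, c4, c5, c6⟩
  · -- rotate the cycle by one: use (b, c, d, v)
    have hside' : M1.Adj b c := by
      rcases symmDiff_adj_iff.1 ha2 with ⟨h, -⟩ | ⟨h, -⟩
      · exact h
      · exact absurd ((h2 b).unique h hside.symm) ncv
    have hcov'' : ∀ x y : V, (symmDiff M1 M2).Adj x y →
        s(x,y) = s(b,c) ∨ s(x,y) = s(c,d) ∨ s(x,y) = s(d,v) ∨ s(x,y) = s(v,b) := by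
      intro x y hxy
      rcases hcov' x y hxy with h | h | h | h <;> tauto
    obtain ⟨c1, c2, c3, c4, c5, c6⟩ :=
      extract_core h1 h2 ha2 ha3 ha4 ha1 nbd ncv hcov'' hside'
    exact ⟨b, c, d, v, nbc, nbd, nbv, ncd, ncv, ndv,
      c1, c2, c3, c4, c5, c6⟩
end Extract

section Step
variable {V : Type*} [Fintype V]

lemma ccc_step {M1 M2 : SimpleGraph V} (h1 : IsPM M1) (h2 : IsPM M2)
    (hc : IsCycleGraphOfLength (symmDiff M1 M2) 4) (M3 : SimpleGraph V) :
    ccc (M2 ⊔ M3) ≤ ccc (M1 ⊔ M3) + 1 := by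
  obtain ⟨a, b, c, d, nab, nac, nad, nbc, nbd, ncd, m1ab, m1cd, m2bc, m2da, cov1, cov2⟩ :=
    cycle4_extract h1 h2 hc
  have hle : M1 ⊔ M3 ≤ ((M2 ⊔ M3) ⊔ eG a b) ⊔ eG c d := by
    intro x y hxy
    rcases hxy with hxy | hxy
    · rcases cov1 x y hxy with h | h | h
      · exact Or.inl (Or.inl (Or.inl h))
      · exact Or.inl (Or.inr (eG_adj.2 ⟨h, hxy.ne⟩))
      · exact Or.inr (eG_adj.2 ⟨h, hxy.ne⟩)
    · exact Or.inl (Or.inl (Or.inr hxy))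
  have hreach : ((M2 ⊔ M3) ⊔ eG a b).Reachable c d := by
    have r1 : ((M2 ⊔ M3) ⊔ eG a b).Adj c b := Or.inl (Or.inl m2bc.symm)
    have r2 : ((M2 ⊔ M3) ⊔ eG a b).Adj b a := Or.inr (eG_adj.2 ⟨Sym2.eq_swap, Ne.symm nab⟩)
    have r3 : ((M2 ⊔ M3) ⊔ eG a b).Adj a d := Or.inl (Or.inl m2da.symm)
    exact (r1.reachable).trans ((r2.reachable).trans r3.reachable)
  calc ccc (M2 ⊔ M3) ≤ ccc ((M2 ⊔ M3) ⊔ eG a b) + 1 := ccc_le_sup_eG_add_one _ a b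
    _ ≤ ccc (((M2 ⊔ M3) ⊔ eG a b) ⊔ eG c d) + 1 :=
        Nat.add_le_add_right (ccc_le_sup_eG_of_reachable hreach) 1
    _ ≤ ccc (M1 ⊔ M3) + 1 := Nat.add_le_add_right (ccc_mono hle) 1

lemma ccc_insert {M1 M2 : SimpleGraph V} {v1 v2 : V} (h1 : IsPM M1) (h2 : IsPM M2)
    (h12v : M2.Adj v1 v2) (hA : ¬ M1.Adj v1 v2) :
    ccc (M1 ⊔ M2) + 1 ≤ ccc (insertEdge M1 s(v1,v2) ⊔ M2) := by
  have h12 : v1 ≠ v2 := h12v.ne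
  have hNPM := insertEdge_isPM h1 h12 hA
  have d13 := hne13 h1 h12 hA
  have d24 := hne24 h1 h12 hA
  have d14 := hne14 h1 h12 hA
  have d23 := hne23 h1 h12 hA
  have d34 := hne34 h1 h12 hA
  set v3 := matchOf M1 v1 with hv3
  set v4 := matchOf M1 v2 with hv4
  set N := insertEdge M1 s(v1,v2) with hN
  have hnbr : ∀ x w, (x = v1 ∨ x = v2) → (N ⊔ M2).Adj x w → (w = v1 ∨ w = v2) := by
    rintro x w hx hadj
    rcases hx with hx | hx <;> rw [hx] at hadj <;> rcases hadj with hadj | hadj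
    · exact Or.inr ((hNPM v1).unique hadj (insertEdge_adj_12 h1 h12 hA))
    · exact Or.inr ((h2 v1).unique hadj h12v)
    · exact Or.inl ((hNPM v2).unique hadj (insertEdge_adj_12 h1 h12 hA).symm)
    · exact Or.inl ((h2 v2).unique hadj h12v.symm)
  have hreachset : ∀ x y : V, (N ⊔ M2).Reachable x y → (x = v1 ∨ x = v2) →
      (y = v1 ∨ y = v2) := by
    intro x y hr
    obtain ⟨p⟩ := hr
    induction p with
    | nil => exact id
    | cons h q ih => exact fun hx => ih (hnbr _ _ hx h)
  have hnr : ¬ (N ⊔ M2).Reachable v1 v3 := by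
    intro hr
    rcases hreachset _ _ hr (Or.inl rfl) with h | h
    · exact d13 h.symm
    · exact d23 h.symm
  have key1 : ccc ((N ⊔ M2) ⊔ eG v1 v3) + 1 ≤ ccc (N ⊔ M2) := ccc_sup_eG_add_one_le d13 hnr
  have key2 : ccc (((N ⊔ M2) ⊔ eG v1 v3) ⊔ eG v2 v4) ≤ ccc ((N ⊔ M2) ⊔ eG v1 v3) :=
    ccc_mono le_sup_left
  have hadjN := fun x y => insertEdge_adj h1 h12 hA (x := x) (y := y)
  have hEq : ((N ⊔ M2) ⊔ eG v1 v3) ⊔ eG v2 v4 = (M1 ⊔ M2) ⊔ eG v3 v4 := by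
    ext x y
    constructor
    · rintro (((hadj | hadj) | hadj) | hadj)
      · rw [hadjN] at hadj
        rcases hadj with ⟨hm, -⟩ | ⟨hs | hs, hxy⟩
        · exact Or.inl (Or.inl hm)
        · exact Or.inl (Or.inr (adj_of_sym2_eq (M1 := M2) hs.symm h12v))
        · exact Or.inr (eG_adj.2 ⟨hs, hxy⟩)
      · exact Or.inl (Or.inr hadj)
      · obtain ⟨hs, hxy⟩ := eG_adj.1 hadj
        exact Or.inl (Or.inl (adj_of_sym2_eq hs.symm (matchOf_adj h1 v1)))
      · obtain ⟨hs, hxy⟩ := eG_adj.1 hadj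
        exact Or.inl (Or.inl (adj_of_sym2_eq hs.symm (matchOf_adj h1 v2)))
    · rintro ((hadj | hadj) | hadj)
      · by_cases hx1 : x = v1
        · subst hx1
          refine Or.inl (Or.inr (eG_adj.2 ⟨?_, hadj.ne⟩))
          rw [eq_matchOf h1 hadj, ← hv3]
        by_cases hy1 : y = v1
        · subst hy1
          refine Or.inl (Or.inr (eG_adj.2 ⟨?_, hadj.ne⟩))
          rw [Sym2.eq_swap, eq_matchOf h1 hadj.symm, ← hv3]
        by_cases hx2 : x = v2
        · subst hx2
          refine Or.inr (eG_adj.2 ⟨?_, hadj.ne⟩)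
          rw [eq_matchOf h1 hadj, ← hv4]
        by_cases hy2 : y = v2
        · subst hy2
          refine Or.inr (eG_adj.2 ⟨?_, hadj.ne⟩)
          rw [Sym2.eq_swap, eq_matchOf h1 hadj.symm, ← hv4]
        · refine Or.inl (Or.inl (Or.inl ?_))
          rw [hadjN]
          exact Or.inl ⟨hadj, hx1, hx2, hy1, hy2⟩
      · exact Or.inl (Or.inl (Or.inr hadj))
      · obtain ⟨hs, hxy⟩ := eG_adj.1 hadj
        refine Or.inl (Or.inl (Or.inl ?_))
        rw [hadjN]
        exact Or.inr ⟨Or.inr hs, hxy⟩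
  have key3 : ccc (M1 ⊔ M2) ≤ ccc ((M1 ⊔ M2) ⊔ eG v3 v4) := by
    apply ccc_le_sup_eG_of_reachable
    have r1 : (M1 ⊔ M2).Adj v3 v1 := Or.inl (matchOf_adj h1 v1).symm
    have r2 : (M1 ⊔ M2).Adj v1 v2 := Or.inr h12v
    have r3 : (M1 ⊔ M2).Adj v2 v4 := Or.inl (matchOf_adj h1 v2)
    exact (r1.reachable).trans ((r2.reachable).trans r3.reachable)
  rw [hEq] at key2
  omega

end Step

section Count
variable {V : Type*} [Fintype V] {M M1 M2 : SimpleGraph V}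

lemma matching_reach (hM : IsPM M) : ∀ {x y : V}, M.Reachable x y → y = x ∨ M.Adj x y := by
  intro x y hr
  obtain ⟨p⟩ := hr
  induction p with
  | nil => exact Or.inl rfl
  | cons h q ih =>
    rcases ih with rfl | hbc
    · exact Or.inr h
    · exact Or.inl ((hM _).unique hbc h.symm)

lemma ccc_matching_ge (hM : IsPM M) {m : ℕ} (hcard : Fintype.card V = 2 * m) :
    m ≤ ccc M := by
  classical
  have hfil : ∀ b ∈ (Finset.univ : Finset V).image M.connectedComponentMk,
      ((Finset.univ : Finset V).filter (fun a => M.connectedComponentMk a = b)).card ≤ 2 := by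
    intro b _
    by_contra hgt
    push_neg at hgt
    obtain ⟨x, hx, y, hy, z, hz, hxy, hxz, hyz⟩ := Finset.two_lt_card.1 hgt
    simp only [Finset.mem_filter] at hx hy hz
    have rxy : M.Reachable x y := (ConnectedComponent.eq).1 (hx.2.trans hy.2.symm)
    have rxz : M.Reachable x z := (ConnectedComponent.eq).1 (hx.2.trans hz.2.symm)
    rcases matching_reach hM rxy with h | axy
    · exact hxy h.symm
    rcases matching_reach hM rxz with h | axz
    · exact hxz h.symm
    · exact hyz ((hM x).unique axy axz)
  have hmain := Finset.card_le_mul_card_image (s := (Finset.univ : Finset V))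
    (f := M.connectedComponentMk) 2 hfil
  letI : Fintype M.ConnectedComponent := Fintype.ofFinite _
  have himg : ((Finset.univ : Finset V).image M.connectedComponentMk).card ≤ ccc M := by
    rw [ccc, Nat.card_eq_fintype_card]
    exact Finset.card_le_univ _
  rw [Finset.card_univ, hcard] at hmain
  omega

lemma matchings_eq_of (h1 : IsPM M1) (h2 : IsPM M2)
    (h : ∀ v, matchOf M1 v = matchOf M2 v) : M1 = M2 := by
  ext x y
  rw [adj_iff_matchOf h1, adj_iff_matchOf h2, h]

lemma exists_diff (h1 : IsPM M1) (h2 : IsPM M2) (hne : M1 ≠ M2) :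
    ∃ v, matchOf M1 v ≠ matchOf M2 v := by
  by_contra h
  push_neg at h
  exact hne (matchings_eq_of h1 h2 h)

lemma ccc_sup_lt (h1 : IsPM M1) (h2 : IsPM M2) (hne : M1 ≠ M2) {m : ℕ}
    (hcard : Fintype.card V = 2 * m) : ccc (M1 ⊔ M2) < m := by
  classical
  letI : Fintype (M1 ⊔ M2).ConnectedComponent := Fintype.ofFinite _
  obtain ⟨v0, hv0⟩ := exists_diff h1 h2 hne
  set G := M1 ⊔ M2 with hG
  set f := G.connectedComponentMk with hfdef
  have hsum : Fintype.card V =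
      ∑ b : G.ConnectedComponent, ((Finset.univ : Finset V).filter (fun a => f a = b)).card := by
    rw [← Finset.card_univ]
    exact Finset.card_eq_sum_card_fiberwise (fun x _ => Finset.mem_univ _)
  have hfib2 : ∀ b : G.ConnectedComponent,
      2 ≤ ((Finset.univ : Finset V).filter (fun a => f a = b)).card := by
    intro b
    obtain ⟨x, hx⟩ := b.exists_rep
    have hadj : G.Adj x (matchOf M1 x) := Or.inl (matchOf_adj h1 x)
    have hsub : ({x, matchOf M1 x} : Finset V) ⊆
        (Finset.univ : Finset V).filter (fun a => f a = b) := by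
      intro a ha
      simp only [Finset.mem_insert, Finset.mem_singleton] at ha
      simp only [Finset.mem_filter, Finset.mem_univ, true_and]
      rcases ha with rfl | rfl
      · exact hx
      · rw [← hx]
        exact ConnectedComponent.sound hadj.symm.reachable
    calc 2 = ({x, matchOf M1 x} : Finset V).card :=
          (Finset.card_pair (matchOf_adj h1 x).ne).symm
      _ ≤ _ := Finset.card_le_card hsub
  have hfib3 : 3 ≤ ((Finset.univ : Finset V).filter (fun a => f a = f v0)).card := by
    have h1a : G.Adj v0 (matchOf M1 v0) := Or.inl (matchOf_adj h1 v0)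
    have h2a : G.Adj v0 (matchOf M2 v0) := Or.inr (matchOf_adj h2 v0)
    have hsub : ({v0, matchOf M1 v0, matchOf M2 v0} : Finset V) ⊆
        (Finset.univ : Finset V).filter (fun a => f a = f v0) := by
      intro a ha
      simp only [Finset.mem_insert, Finset.mem_singleton] at ha
      simp only [Finset.mem_filter, Finset.mem_univ, true_and]
      rcases ha with rfl | rfl | rfl
      · rfl
      · exact ConnectedComponent.sound h1a.symm.reachable
      · exact ConnectedComponent.sound h2a.symm.reachable
    have hc3 : ({v0, matchOf M1 v0, matchOf M2 v0} : Finset V).card = 3 := by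
      rw [Finset.card_insert_of_notMem, Finset.card_pair hv0]
      simp only [Finset.mem_insert, Finset.mem_singleton, not_or]
      exact ⟨(matchOf_adj h1 v0).ne, (matchOf_adj h2 v0).ne⟩
    calc 3 = _ := hc3.symm
      _ ≤ _ := Finset.card_le_card hsub
  have hsplit := Finset.sum_erase_add (Finset.univ : Finset G.ConnectedComponent)
    (fun b => ((Finset.univ : Finset V).filter (fun a => f a = b)).card)
    (Finset.mem_univ (f v0))
  have hrest := Finset.card_nsmul_le_sum
    ((Finset.univ : Finset G.ConnectedComponent).erase (f v0))
    (fun b => ((Finset.univ : Finset V).filter (fun a => f a = b)).card) 2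
    (fun b _ => hfib2 b)
  rw [Finset.card_erase_of_mem (Finset.mem_univ _), Finset.card_univ, smul_eq_mul] at hrest
  beta_reduce at hsplit
  have hccc : ccc G = Fintype.card G.ConnectedComponent := Nat.card_eq_fintype_card
  have hpos : 1 ≤ Fintype.card G.ConnectedComponent :=
    Fintype.card_pos_iff.2 ⟨f v0⟩
  rw [hcard] at hsum
  omega

end Count

section Dist
variable {m : ℕ}

lemma card_fin : Fintype.card (Fin (2*m)) = 2*m := by simp

lemma lb_walk (X Y : PMVertex m) (p : (matchingGraph m).Walk X Y) :
    m - ccc (X.1 ⊔ Y.1) ≤ p.length := by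
  induction p with
  | nil =>
    rename_i Z
    have h := ccc_matching_ge (M := Z.1) Z.2 (card_fin (m := m))
    rw [sup_idem]
    simp
    omega
  | cons h q ih =>
    rename_i A B C
    have h' : MatchAdj A.1 B.1 := h
    have step := ccc_step (M1 := A.1) (M2 := B.1) A.2 B.2 h'.2 C.1
    rw [Walk.length_cons]
    omega

lemma ub_walk : ∀ (k : ℕ) (X Y : PMVertex m), m - ccc (X.1 ⊔ Y.1) ≤ k →
    ∃ p : (matchingGraph m).Walk X Y, p.length = m - ccc (X.1 ⊔ Y.1) := by
  intro k
  induction k with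
  | zero =>
    intro X Y h
    have hXY : X = Y := by
      by_contra hne
      have hne' : X.1 ≠ Y.1 := fun hh => hne (Subtype.ext hh)
      have := ccc_sup_lt X.2 Y.2 hne' (card_fin (m := m))
      omega
    subst hXY
    refine ⟨Walk.nil, ?_⟩
    have := ccc_matching_ge (M := X.1) X.2 (card_fin (m := m))
    rw [sup_idem, Walk.length_nil]
    omega
  | succ k ih =>
    intro X Y h
    by_cases hXY : X = Y
    · subst hXY
      refine ⟨Walk.nil, ?_⟩
      have := ccc_matching_ge (M := X.1) X.2 (card_fin (m := m))
      rw [sup_idem, Walk.length_nil]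
      omega
    · have hne' : X.1 ≠ Y.1 := fun hh => hXY (Subtype.ext hh)
      obtain ⟨v0, hv0⟩ := exists_diff X.2 Y.2 hne'
      have h12v : Y.1.Adj v0 (matchOf Y.1 v0) := matchOf_adj Y.2 v0
      have hA : ¬ X.1.Adj v0 (matchOf Y.1 v0) := fun hc => hv0 (eq_matchOf X.2 hc).symm
      have h12 : v0 ≠ matchOf Y.1 v0 := h12v.ne
      have hNPM : IsPM (insertEdge X.1 s(v0, matchOf Y.1 v0)) := insertEdge_isPM X.2 h12 hA
      have hadj : (matchingGraph m).Adj X ⟨insertEdge X.1 s(v0, matchOf Y.1 v0), hNPM⟩ := by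
        show MatchAdj X.1 _
        exact ⟨insertEdge_ne X.2 h12 hA, insertEdge_cycle4 X.2 h12 hA⟩
      have e1 := ccc_step (M1 := X.1) X.2 hNPM (insertEdge_cycle4 X.2 h12 hA) Y.1
      have e2 := ccc_insert X.2 Y.2 h12v hA
      have hlt := ccc_sup_lt X.2 Y.2 hne' (card_fin (m := m))
      have hk : m - ccc ((insertEdge X.1 s(v0, matchOf Y.1 v0)) ⊔ Y.1) ≤ k := by omega
      obtain ⟨q, hq⟩ := ih ⟨_, hNPM⟩ Y hk
      have hq' : q.length = m - ccc ((insertEdge X.1 s(v0, matchOf Y.1 v0)) ⊔ Y.1) := hq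
      refine ⟨Walk.cons hadj q, ?_⟩
      rw [Walk.length_cons, hq']
      omega

lemma dist_eq_ccc (X Y : PMVertex m) :
    (matchingGraph m).dist X Y = m - ccc (X.1 ⊔ Y.1) := by
  obtain ⟨p, hp⟩ := ub_walk (m - ccc (X.1 ⊔ Y.1)) X Y le_rfl
  have h1 := SimpleGraph.dist_le p
  obtain ⟨q, hq⟩ := (Reachable.exists_walk_length_eq_dist ⟨p⟩)
  have h2 := lb_walk X Y q
  omega

end Dist

/-- If `M'` and `M''` are distinct perfect matchings of `K_{2m}` and `e` is an
edge of `M''` not in `M'`, then `M' * e` is adjacent to `M'` in `𝒫ₘ` and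
`d(M' * e, M'') = d(M', M'') - 1`; i.e. there is a geodesic from `M'` to `M''`
starting with the insertion of `e`. -/
theorem stmt9 (m : ℕ) (M' M'' : PMVertex m) (hne : M' ≠ M'')
    (e : Sym2 (Fin (2 * m))) (he : e ∈ M''.1.edgeSet) (he' : e ∉ M'.1.edgeSet) :
    ∃ h : IsPerfMatching (insertEdge M'.1 e),
      (matchingGraph m).Adj M' ⟨insertEdge M'.1 e, h⟩ ∧
      (matchingGraph m).dist ⟨insertEdge M'.1 e, h⟩ M'' =
        (matchingGraph m).dist M' M'' - 1 := by
  revert he he'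
  refine Sym2.ind (fun v1 v2 he he' => ?_) e
  rw [SimpleGraph.mem_edgeSet] at he
  have hA : ¬ M'.1.Adj v1 v2 := fun hc => he' ((SimpleGraph.mem_edgeSet _).2 hc)
  have h12 : v1 ≠ v2 := he.ne
  have hM' : IsPM M'.1 := M'.2
  have hNPM : IsPM (insertEdge M'.1 s(v1,v2)) := insertEdge_isPM hM' h12 hA
  refine ⟨hNPM, ?_, ?_⟩
  · show MatchAdj M'.1 _
    exact ⟨insertEdge_ne hM' h12 hA, insertEdge_cycle4 hM' h12 hA⟩
  · have e1 := ccc_step (M1 := M'.1) hM' hNPM (insertEdge_cycle4 hM' h12 hA) M''.1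
    have e2 := ccc_insert hM' M''.2 he hA
    have hne' : M'.1 ≠ M''.1 := fun hh => hne (Subtype.ext hh)
    have hlt := ccc_sup_lt hM' M''.2 hne' (card_fin (m := m))
    rw [dist_eq_ccc, dist_eq_ccc]
    have hx : ccc ((⟨insertEdge M'.1 s(v1,v2), hNPM⟩ : PMVertex m).1 ⊔ M''.1)
        = ccc (insertEdge M'.1 s(v1,v2) ⊔ M''.1) := rfl
    rw [hx]
    omega
end
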